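/- arXiv:2408.08602 — 3 statements merged into one kernel-verified Lean document; each statement's English description precedes it below -/
import Mathlib

section
/- Define z ∈ {0,1}^n by z_i = 1 if β_{ijk} > 0 for some j,k and z_i = 0 otherwise, and assume the set {i : z_i = 1} is nonempty. Under Assumptions A2 and A3b, if ρ(I − hD + hB) < 1 and θ := min over all i with z_i = 1 of (2 Σ_j β_{ij} z_j + Σ_{j,k} β_{ijk} z_j z_k)/δ_i satisfies θ ≥ 4, then the healthy state 0 is locally asymptotically stable, and there exists an endemic equilibrium x̄ of F with x̄_i > 0 for all i and x̄_i ≥ 1/2 for every i with z_i = 1, which is also locally asymptotically stable (bistability). -/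
set_option maxHeartbeats 1000000
open Finset Filter

/-- Spectral radius of a real square matrix: the maximum modulus of its complex
eigenvalues (elements of the spectrum of the matrix viewed over `ℂ`). -/
noncomputable def specRad {n : ℕ} (M : Matrix (Fin n) (Fin n) ℝ) : ℝ :=
  sSup ((fun z : ℂ => ‖z‖) '' spectrum ℂ (M.map (fun a => (a : ℂ))))

/-- A nonnegative matrix is irreducible: there is no nonempty proper subset `S` of the
index set with `M i j = 0` for all `i ∈ S` and `j ∉ S`. -/
def MatIrred {n : ℕ} (M : Matrix (Fin n) (Fin n) ℝ) : Prop :=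
  ∀ S : Set (Fin n), S.Nonempty → S ≠ Set.univ → ∃ i ∈ S, ∃ j, j ∉ S ∧ M i j ≠ 0

/-- A nonnegative `n×n×n` array is irreducible: there is no nonempty proper subset `S`
with `H i j k = 0` for all `i ∈ S` and `j, k ∉ S`. -/
def TensIrred {n : ℕ} (H : Fin n → Fin n → Fin n → ℝ) : Prop :=
  ∀ S : Set (Fin n), S.Nonempty → S ≠ Set.univ →
    ∃ i ∈ S, ∃ j k, j ∉ S ∧ k ∉ S ∧ H i j k ≠ 0

/-- The discrete-time higher-order SIS map
`F(x)_i = x_i + h(−δ_i x_i + (1−x_i)(Σ_j β_{ij} x_j + Σ_{j,k} β_{ijk} x_j x_k))`. -/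
noncomputable def SIS {n : ℕ} (h : ℝ) (δ : Fin n → ℝ) (B : Matrix (Fin n) (Fin n) ℝ)
    (H : Fin n → Fin n → Fin n → ℝ) (x : Fin n → ℝ) : Fin n → ℝ := fun i =>
  x i + h * (-(δ i * x i) +
    (1 - x i) * ((∑ j, B i j * x j) + ∑ j, ∑ k, H i j k * x j * x k))

/-- `x` is a trajectory of the discrete-time system `x(t+1) = F(x(t))`. -/
def IsTraj {n : ℕ} (F : (Fin n → ℝ) → Fin n → ℝ) (x : ℕ → Fin n → ℝ) : Prop :=
  ∀ t, x (t + 1) = F (x t)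

/-- Membership in the cube `[0,1]^n`. -/
def InCube {n : ℕ} (y : Fin n → ℝ) : Prop := ∀ i, y i ∈ Set.Icc (0 : ℝ) 1

/-- Local asymptotic stability (max-norm) of an equilibrium `xb`, for trajectories
starting in `[0,1]^n`. -/
def LocAsympStable {n : ℕ} (F : (Fin n → ℝ) → Fin n → ℝ) (xb : Fin n → ℝ) : Prop :=
  ∀ ε > 0, ∃ d > 0, ∀ x : ℕ → Fin n → ℝ, IsTraj F x → InCube (x 0) → ‖x 0 - xb‖ < d →
    (∀ t, ‖x t - xb‖ < ε) ∧ Tendsto x atTop (nhds xb)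

/-- Instability (max-norm) of an equilibrium `xb`, for trajectories starting in `[0,1]^n`. -/
def Unstable {n : ℕ} (F : (Fin n → ℝ) → Fin n → ℝ) (xb : Fin n → ℝ) : Prop :=
  ∃ ε > 0, ∀ d > 0, ∃ x : ℕ → Fin n → ℝ, IsTraj F x ∧ InCube (x 0) ∧ ‖x 0 - xb‖ < d ∧
    ∃ t, ε ≤ ‖x t - xb‖

section spectral

attribute [local instance] Matrix.linftyOpNormedRing Matrix.linftyOpNormedAlgebra

lemma pow_nonneg_entries {n : ℕ} (M : Matrix (Fin n) (Fin n) ℝ) (hM : ∀ i j, 0 ≤ M i j) :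
    ∀ m i j, 0 ≤ (M ^ m) i j := by
  intro m
  induction m with
  | zero => intro i j; by_cases hij : i = j <;> simp [pow_zero, Matrix.one_apply, hij]
  | succ m ih =>
    intro i j
    rw [pow_succ, Matrix.mul_apply]
    exact Finset.sum_nonneg fun k _ => mul_nonneg (ih i k) (hM k j)

lemma exists_small_pow {n : ℕ} (hn : 0 < n) (M : Matrix (Fin n) (Fin n) ℝ)
    (hM : ∀ i j, 0 ≤ M i j) (hρ : specRad M < 1) :
    ∃ m : ℕ, 1 ≤ m ∧ ∀ i, ∑ j, (M ^ m) i j < 1 := by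
  haveI : Nonempty (Fin n) := ⟨⟨0, hn⟩⟩
  set A : Matrix (Fin n) (Fin n) ℂ := M.map (fun a => (a : ℂ)) with hA
  -- every element of the spectrum has norm < 1
  have hcpt : IsCompact ((fun z : ℂ => ‖z‖) '' spectrum ℂ A) :=
    (spectrum.isCompact A).image continuous_norm
  have hbdd : BddAbove ((fun z : ℂ => ‖z‖) '' spectrum ℂ A) := hcpt.bddAbove
  have hne : (spectrum ℂ A).Nonempty := spectrum.nonempty A
  have hlt : ∀ k ∈ spectrum ℂ A, ‖k‖₊ < (1 : NNReal) := by
    intro k hk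
    have : ‖k‖ ≤ specRad M := le_csSup hbdd ⟨k, hk, rfl⟩
    have h1 : ‖k‖ < 1 := lt_of_le_of_lt this hρ
    rw [← NNReal.coe_lt_coe]
    simpa using h1
  have hsr : spectralRadius ℂ A < 1 := by
    simpa using spectrum.spectralRadius_lt_of_forall_lt_of_nonempty hne hlt
  -- Gelfand
  have hg := spectrum.pow_nnnorm_pow_one_div_tendsto_nhds_spectralRadius A
  have hev : ∀ᶠ m : ℕ in atTop, (‖A ^ m‖₊ : ENNReal) ^ (1 / (m : ℝ)) < 1 :=
    hg.eventually_lt_const hsr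
  obtain ⟨m, hm1, hm⟩ : ∃ m : ℕ, 1 ≤ m ∧ (‖A ^ m‖₊ : ENNReal) ^ (1 / (m : ℝ)) < 1 := by
    obtain ⟨m, hm⟩ := (hev.and (eventually_ge_atTop 1)).exists
    exact ⟨m, hm.2, hm.1⟩
  have hAm : ‖A ^ m‖ < 1 := by
    by_contra hcon
    push_neg at hcon
    have h1 : (1 : ENNReal) ≤ (‖A ^ m‖₊ : ENNReal) := by
      rw [ENNReal.one_le_coe_iff]
      rw [← NNReal.coe_le_coe]
      simpa using hcon
    have : (1 : ENNReal) ≤ (‖A ^ m‖₊ : ENNReal) ^ (1 / (m : ℝ)) := by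
      calc (1 : ENNReal) = 1 ^ (1 / (m : ℝ)) := by rw [ENNReal.one_rpow]
      _ ≤ _ := ENNReal.rpow_le_rpow h1 (by positivity)
    exact absurd hm (not_lt.2 this)
  -- row sums
  refine ⟨m, hm1, fun i => ?_⟩
  have hAp : A ^ m = (M ^ m).map (fun a => (a : ℂ)) := by
    rw [hA]
    have : ∀ N : Matrix (Fin n) (Fin n) ℝ, N.map (fun a => (a : ℂ)) = (algebraMap ℝ ℂ).mapMatrix N := by
      intro N; ext i j; simp [Matrix.map_apply]
    rw [this, this, ← map_pow]
  have hrow : (∑ j, ‖(A ^ m) i j‖₊) ≤ ‖A ^ m‖₊ := by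
    rw [Matrix.linfty_opNNNorm_def]
    exact Finset.le_sup (f := fun i => ∑ j, ‖(A ^ m) i j‖₊) (Finset.mem_univ i)
  have hrow' : (∑ j, ‖(A ^ m) i j‖) ≤ ‖A ^ m‖ := by
    have := (NNReal.coe_le_coe).2 hrow
    simpa [NNReal.coe_sum] using this
  have heq : ∀ j, ‖(A ^ m) i j‖ = (M ^ m) i j := by
    intro j
    rw [hAp]
    simp [Matrix.map_apply, Complex.norm_real, Real.norm_eq_abs,
      abs_of_nonneg (pow_nonneg_entries M hM m i j)]
  calc ∑ j, (M ^ m) i j = ∑ j, ‖(A ^ m) i j‖ := by simp [heq]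
  _ ≤ ‖A ^ m‖ := hrow'
  _ < 1 := hAm

lemma exists_v {n : ℕ} (hn : 0 < n) (M : Matrix (Fin n) (Fin n) ℝ)
    (hM : ∀ i j, 0 ≤ M i j) (hρ : specRad M < 1) :
    ∃ v : Fin n → ℝ, (∀ i, 1 ≤ v i) ∧ ∃ α : ℝ, 0 < α ∧ α ≤ 1 ∧
      ∀ i, (∑ j, M i j * v j) + α ≤ v i := by
  haveI : Nonempty (Fin n) := ⟨⟨0, hn⟩⟩
  obtain ⟨m, hm1, hm⟩ := exists_small_pow hn M hM hρ
  set r : ℕ → Fin n → ℝ := fun j i => ∑ k, (M ^ j) i k with hr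
  have hr0 : ∀ i, r 0 i = 1 := by
    intro i; simp [hr, Matrix.one_apply]
  have hrnn : ∀ j i, 0 ≤ r j i := fun j i =>
    Finset.sum_nonneg fun k _ => pow_nonneg_entries M hM j i k
  have hrsucc : ∀ j i, r (j + 1) i = ∑ k, M i k * r j k := by
    intro j i
    simp only [hr]
    rw [pow_succ']
    simp only [Matrix.mul_apply, Finset.mul_sum]
    rw [Finset.sum_comm]
  set v : Fin n → ℝ := fun i => ∑ j ∈ Finset.range m, r j i with hv
  have hv1 : ∀ i, 1 ≤ v i := by
    intro i
    have : r 0 i ≤ v i :=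
      Finset.single_le_sum (fun j _ => hrnn j i) (Finset.mem_range.2 hm1)
    rwa [hr0] at this
  have hMv : ∀ i, ∑ j, M i j * v j = v i + r m i - 1 := by
    intro i
    have h1 : ∑ j, M i j * v j = ∑ k ∈ Finset.range m, r (k + 1) i := by
      simp only [hv, Finset.mul_sum]
      rw [Finset.sum_comm]
      exact Finset.sum_congr rfl fun k _ => (hrsucc k i).symm
    rw [h1]
    have h2 : ∑ k ∈ Finset.range (m + 1), r k i = (∑ k ∈ Finset.range m, r (k + 1) i) + r 0 i :=
      Finset.sum_range_succ' (fun k => r k i) m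
    have h3 : ∑ k ∈ Finset.range (m + 1), r k i = (∑ k ∈ Finset.range m, r k i) + r m i :=
      Finset.sum_range_succ (fun k => r k i) m
    rw [hr0] at h2
    have := h2.symm.trans h3
    simp only [hv]
    linarith
  set c : ℝ := Finset.univ.sup' Finset.univ_nonempty (fun i => r m i) with hc
  have hc1 : c < 1 := by
    rw [hc, Finset.sup'_lt_iff]
    exact fun i _ => hm i
  have hcle : ∀ i, r m i ≤ c := fun i =>
    Finset.le_sup' (fun i => r m i) (Finset.mem_univ i)
  have hc0 : 0 ≤ c := le_trans (hrnn m (Classical.arbitrary _)) (hcle _)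
  refine ⟨v, hv1, 1 - c, by linarith, by linarith, fun i => ?_⟩
  have := hMv i
  have := hcle i
  linarith
end spectral

section dyn

variable {n : ℕ} {h : ℝ} {δ : Fin n → ℝ} {B : Matrix (Fin n) (Fin n) ℝ}
  {H : Fin n → Fin n → Fin n → ℝ}

/-- the infection pressure -/
noncomputable def sfun (B : Matrix (Fin n) (Fin n) ℝ) (H : Fin n → Fin n → Fin n → ℝ)
    (x : Fin n → ℝ) (i : Fin n) : ℝ :=
  (∑ j, B i j * x j) + ∑ j, ∑ k, H i j k * x j * x k

lemma SIS_eq (x : Fin n → ℝ) (i : Fin n) :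
    SIS h δ B H x i = x i + h * (-(δ i * x i) + (1 - x i) * sfun B H x i) := rfl

lemma sfun_nonneg (hB : ∀ i j, 0 ≤ B i j) (hH : ∀ i j k, 0 ≤ H i j k)
    {x : Fin n → ℝ} (hx : ∀ j, 0 ≤ x j) (i : Fin n) : 0 ≤ sfun B H x i := by
  refine add_nonneg (Finset.sum_nonneg fun j _ => mul_nonneg (hB i j) (hx j))
    (Finset.sum_nonneg fun j _ => Finset.sum_nonneg fun k _ =>
      mul_nonneg (mul_nonneg (hH i j k) (hx j)) (hx k))

lemma sfun_mono (hB : ∀ i j, 0 ≤ B i j) (hH : ∀ i j k, 0 ≤ H i j k)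
    {x y : Fin n → ℝ} (hx : ∀ j, 0 ≤ x j) (hxy : ∀ j, x j ≤ y j) (i : Fin n) :
    sfun B H x i ≤ sfun B H y i := by
  refine add_le_add (Finset.sum_le_sum fun j _ => mul_le_mul_of_nonneg_left (hxy j) (hB i j))
    (Finset.sum_le_sum fun j _ => Finset.sum_le_sum fun k _ => ?_)
  have h1 : 0 ≤ y j := le_trans (hx j) (hxy j)
  calc H i j k * x j * x k ≤ H i j k * y j * x k := by
        apply mul_le_mul_of_nonneg_right _ (hx k)
        exact mul_le_mul_of_nonneg_left (hxy j) (hH i j k)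
  _ ≤ H i j k * y j * y k :=
        mul_le_mul_of_nonneg_left (hxy k) (mul_nonneg (hH i j k) h1)

lemma sfun_le_total (hB : ∀ i j, 0 ≤ B i j) (hH : ∀ i j k, 0 ≤ H i j k)
    {x : Fin n → ℝ} (hx : InCube x) (i : Fin n) :
    sfun B H x i ≤ (∑ j, B i j) + ∑ j, ∑ k, H i j k := by
  have := sfun_mono hB hH (fun j => (hx j).1) (fun j => (hx j).2) (y := fun _ => 1) i
  simpa [sfun] using this

lemma hs_lt (hh : 0 < h) (hA3b : ∀ i, h * (δ i + (∑ j, B i j) + ∑ j, ∑ k, H i j k) < 1)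
    (hB : ∀ i j, 0 ≤ B i j) (hH : ∀ i j k, 0 ≤ H i j k)
    {x : Fin n → ℝ} (hx : InCube x) (i : Fin n) :
    h * δ i + h * sfun B H x i < 1 := by
  have h1 := sfun_le_total hB hH hx i
  have h2 := hA3b i
  nlinarith [hs_lt_aux h1 hh.le]
where hs_lt_aux {a b : ℝ} (hab : a ≤ b) (hh : 0 ≤ h) : h * a ≤ h * b :=
  mul_le_mul_of_nonneg_left hab hh

lemma SIS_mem (hh : 0 < h) (hδ : ∀ i, 0 < δ i)
    (hB : ∀ i j, 0 ≤ B i j) (hH : ∀ i j k, 0 ≤ H i j k)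
    (hA3b : ∀ i, h * (δ i + (∑ j, B i j) + ∑ j, ∑ k, H i j k) < 1)
    {x : Fin n → ℝ} (hx : InCube x) (i : Fin n) :
    0 ≤ SIS h δ B H x i ∧ SIS h δ B H x i ≤ 1 - h * δ i := by
  have hs0 := sfun_nonneg hB hH (fun j => (hx j).1) i
  have hslt := hs_lt hh hA3b hB hH hx i
  have hx0 := (hx i).1
  have hx1 := (hx i).2
  constructor
  · rw [SIS_eq]
    nlinarith [mul_nonneg (sub_nonneg.2 hx1) hs0]
  · rw [SIS_eq]
    nlinarith [mul_nonneg (sub_nonneg.2 hx1) hs0, mul_nonneg hx0 hs0]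

lemma SIS_incube (hh : 0 < h) (hδ : ∀ i, 0 < δ i)
    (hB : ∀ i j, 0 ≤ B i j) (hH : ∀ i j k, 0 ≤ H i j k)
    (hA3b : ∀ i, h * (δ i + (∑ j, B i j) + ∑ j, ∑ k, H i j k) < 1)
    {x : Fin n → ℝ} (hx : InCube x) : InCube (SIS h δ B H x) := by
  intro i
  obtain ⟨h0, h1⟩ := SIS_mem hh hδ hB hH hA3b hx i
  have := (hδ i)
  constructor
  · exact h0
  · nlinarith

lemma SIS_mono (hh : 0 < h) (hδ : ∀ i, 0 < δ i)
    (hB : ∀ i j, 0 ≤ B i j) (hH : ∀ i j k, 0 ≤ H i j k)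
    (hA3b : ∀ i, h * (δ i + (∑ j, B i j) + ∑ j, ∑ k, H i j k) < 1)
    {x y : Fin n → ℝ} (hx : InCube x) (hy : InCube y) (hxy : ∀ j, x j ≤ y j) (i : Fin n) :
    SIS h δ B H x i ≤ SIS h δ B H y i := by
  have hsm := sfun_mono hB hH (fun j => (hx j).1) hxy i
  have hslt := hs_lt hh hA3b hB hH hx i
  have hs0 := sfun_nonneg hB hH (fun j => (hx j).1) i
  have P1 : 0 ≤ (y i - x i) * (1 - h * δ i - h * sfun B H x i) :=
    mul_nonneg (sub_nonneg.2 (hxy i)) (by linarith)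
  have P2 : 0 ≤ h * ((1 - y i) * (sfun B H y i - sfun B H x i)) :=
    mul_nonneg hh.le (mul_nonneg (sub_nonneg.2 (hy i).2) (sub_nonneg.2 hsm))
  rw [SIS_eq, SIS_eq]
  nlinarith [P1, P2]

lemma SIS_cont : Continuous (SIS h δ B H) := by
  apply continuous_pi
  intro i
  unfold SIS
  fun_prop

end dyn

section scale
variable {n : ℕ}

lemma sum_scaleB (B : Matrix (Fin n) (Fin n) ℝ) (x : Fin n → ℝ) (l : ℝ) (i : Fin n) :
    ∑ j, B i j * (l * x j) = l * ∑ j, B i j * x j := by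
  rw [Finset.mul_sum]; exact Finset.sum_congr rfl fun j _ => by ring

lemma sum_scaleH (H : Fin n → Fin n → Fin n → ℝ) (x : Fin n → ℝ) (l : ℝ) (i : Fin n) :
    ∑ j, ∑ k, H i j k * (l * x j) * (l * x k) = l ^ 2 * ∑ j, ∑ k, H i j k * x j * x k := by
  rw [Finset.mul_sum]
  refine Finset.sum_congr rfl fun j _ => ?_
  rw [Finset.mul_sum]
  exact Finset.sum_congr rfl fun k _ => by ring

/-- key algebraic identity at a fixed point -/
lemma scale_identity (h : ℝ) (δ : Fin n → ℝ) (B : Matrix (Fin n) (Fin n) ℝ)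
    (H : Fin n → Fin n → Fin n → ℝ) (xb : Fin n → ℝ) (i : Fin n) (l : ℝ)
    (hfix : δ i * xb i = (1 - xb i) * ((∑ j, B i j * xb j) + ∑ j, ∑ k, H i j k * xb j * xb k)) :
    SIS h δ B H (fun j => l * xb j) i =
      l * xb i + h * l * (1 - l) *
        ((∑ j, B i j * xb j) * xb i -
          (∑ j, ∑ k, H i j k * xb j * xb k) * (1 - (1 + l) * xb i)) := by
  rw [SIS_eq, sfun]
  rw [sum_scaleB, sum_scaleH]
  set L := ∑ j, B i j * xb j
  set Q := ∑ j, ∑ k, H i j k * xb j * xb k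
  linear_combination (-(h * l)) * hfix

lemma push_up {h l K G : ℝ} (hh : 0 < h) (hl1 : 1 / 2 ≤ l) (hl2 : l ≤ 1)
    (hK : G / 2 ≤ K) (hG : 0 ≤ G) : (1 - l) * (h * G / 4) ≤ h * l * (1 - l) * K := by
  have hK0 : 0 ≤ K := by linarith
  have h1 : G / 4 ≤ l * K := by nlinarith [mul_nonneg (by linarith : (0:ℝ) ≤ l - 1/2) hK0]
  have h2 : 0 ≤ h * (1 - l) * (l * K - G / 4) :=
    mul_nonneg (mul_nonneg hh.le (by linarith)) (by linarith)
  nlinarith [h2]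

lemma push_down {h l K G : ℝ} (hh : 0 < h) (hl1 : 1 ≤ l)
    (hK : G / 2 ≤ K) (hG : 0 ≤ G) : h * l * (1 - l) * K ≤ -((l - 1) * (h * G / 4)) := by
  have hK0 : 0 ≤ K := by linarith
  have h1 : G / 4 ≤ l * K := by nlinarith [mul_nonneg (by linarith : (0:ℝ) ≤ l - 1) hK0]
  have h2 : 0 ≤ h * (l - 1) * (l * K - G / 4) :=
    mul_nonneg (mul_nonneg hh.le (by linarith)) (by linarith)
  nlinarith [h2]

lemma sub_bracket {Qb xbi l Lb : ℝ} (hQb : 0 ≤ Qb)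
    (hcase : Qb = 0 ∨ 1 / 2 ≤ xbi) (hl1 : 1 / 2 ≤ l) (hl2 : l ≤ 1)
    (hε : (1 - l) * Qb ≤ Lb * xbi) (hx0 : 0 ≤ xbi) (hG : 0 ≤ Lb * xbi) :
    Lb * xbi / 2 ≤ Lb * xbi - Qb * (1 - (1 + l) * xbi) := by
  rcases hcase with hc | hc
  · subst hc; linarith
  · have e1 : 1 - (1 + l) * xbi ≤ (1 - l) / 2 := by nlinarith
    have e2 : Qb * (1 - (1 + l) * xbi) ≤ Qb * ((1 - l) / 2) :=
      mul_le_mul_of_nonneg_left e1 hQb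
    nlinarith

lemma super_bracket {Qb xbi l Lb : ℝ} (hQb : 0 ≤ Qb)
    (hcase : Qb = 0 ∨ 1 / 2 ≤ xbi) (hl1 : 1 ≤ l) (hx0 : 0 ≤ xbi) (hG : 0 ≤ Lb * xbi) :
    Lb * xbi / 2 ≤ Lb * xbi - Qb * (1 - (1 + l) * xbi) := by
  rcases hcase with hc | hc
  · subst hc; linarith
  · have e1 : 1 - (1 + l) * xbi ≤ 0 := by nlinarith
    have e2 : Qb * (1 - (1 + l) * xbi) ≤ 0 :=
      mul_nonpos_of_nonneg_of_nonpos hQb e1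
    linarith

end scale

section healthy
variable {n : ℕ}

lemma M_apply (h : ℝ) (δ : Fin n → ℝ) (B : Matrix (Fin n) (Fin n) ℝ) (i j : Fin n) :
    ((1 : Matrix (Fin n) (Fin n) ℝ) - h • Matrix.diagonal δ + h • B) i j =
      (if i = j then 1 - h * δ i else 0) + h * B i j := by
  simp only [Matrix.add_apply, Matrix.sub_apply, Matrix.smul_apply, Matrix.one_apply,
    Matrix.diagonal_apply, smul_eq_mul]
  split_ifs with hij
  · subst hij; ring
  · ring

lemma M_mulsum (h : ℝ) (δ : Fin n → ℝ) (B : Matrix (Fin n) (Fin n) ℝ) (x : Fin n → ℝ)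
    (i : Fin n) :
    ∑ j, ((1 : Matrix (Fin n) (Fin n) ℝ) - h • Matrix.diagonal δ + h • B) i j * x j =
      (1 - h * δ i) * x i + h * ∑ j, B i j * x j := by
  have : ∀ j, ((1 : Matrix (Fin n) (Fin n) ℝ) - h • Matrix.diagonal δ + h • B) i j * x j =
      (if i = j then (1 - h * δ i) * x j else 0) + h * (B i j * x j) := by
    intro j
    rw [M_apply]
    split_ifs <;> ring
  simp only [this]
  rw [Finset.sum_add_distrib, Finset.sum_ite_eq, Finset.mul_sum]
  simp

theorem healthy_stable (hn : 2 ≤ n) (h : ℝ) (hh : 0 < h)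
    (δ : Fin n → ℝ) (B : Matrix (Fin n) (Fin n) ℝ) (H : Fin n → Fin n → Fin n → ℝ)
    (hδ : ∀ i, 0 < δ i) (hB : ∀ i j, 0 ≤ B i j) (hH : ∀ i j k, 0 ≤ H i j k)
    (hA3b : ∀ i, h * (δ i + (∑ j, B i j) + ∑ j, ∑ k, H i j k) < 1)
    (hρ : specRad ((1 : Matrix (Fin n) (Fin n) ℝ) - h • Matrix.diagonal δ + h • B) < 1) :
    LocAsympStable (SIS h δ B H) 0 := by
  have hn0 : 0 < n := by omega
  haveI : Nonempty (Fin n) := ⟨⟨0, hn0⟩⟩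
  set M := (1 : Matrix (Fin n) (Fin n) ℝ) - h • Matrix.diagonal δ + h • B with hMdef
  have hδ1 : ∀ i, h * δ i < 1 := by
    intro i
    have h1 := hA3b i
    have h2 : 0 ≤ ∑ j, B i j := Finset.sum_nonneg fun j _ => hB i j
    have h3 : 0 ≤ ∑ j, ∑ k, H i j k :=
      Finset.sum_nonneg fun j _ => Finset.sum_nonneg fun k _ => hH i j k
    nlinarith
  have hM : ∀ i j, 0 ≤ M i j := by
    intro i j
    rw [hMdef, M_apply]
    have := hδ1 i
    split_ifs <;> nlinarith [hB i j]
  obtain ⟨v, hv1, α, hα0, hα1, hvineq⟩ := exists_v hn0 M hM hρ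
  set Vm : ℝ := Finset.univ.sup' Finset.univ_nonempty v with hVm
  have hVm1 : 1 ≤ Vm := le_trans (hv1 _) (Finset.le_sup' v (Finset.mem_univ (Classical.arbitrary _)))
  have hVle : ∀ i, v i ≤ Vm := fun i => Finset.le_sup' v (Finset.mem_univ i)
  set qm : ℝ := Finset.univ.sup' Finset.univ_nonempty (fun i => ∑ j, ∑ k, H i j k) with hqm
  have hqm0 : 0 ≤ qm := le_trans
    (Finset.sum_nonneg fun j _ => Finset.sum_nonneg fun k _ => hH (Classical.arbitrary _) j k)
    (Finset.le_sup' (fun i => ∑ j, ∑ k, H i j k) (Finset.mem_univ (Classical.arbitrary _)))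
  have hqle : ∀ i, (∑ j, ∑ k, H i j k) ≤ qm := fun i => Finset.le_sup' (fun i => ∑ j, ∑ k, H i j k) (Finset.mem_univ i)
  set c1 : ℝ := α / (2 * (h * qm * Vm ^ 2 + 1)) with hc1
  have hc1pos : 0 < c1 := by
    apply div_pos hα0
    nlinarith [mul_nonneg (mul_nonneg hh.le hqm0) (sq_nonneg Vm)]
  set β : ℝ := α / (2 * Vm) with hβ
  have hβpos : 0 < β := div_pos hα0 (by linarith)
  have hβle : β ≤ 1 / 2 := by
    rw [hβ, div_le_iff₀ (by linarith)]
    nlinarith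
  -- key contraction step
  have key : ∀ c : ℝ, 0 < c → c ≤ c1 → ∀ x : Fin n → ℝ, InCube x →
      (∀ i, x i ≤ c * v i) → ∀ i, SIS h δ B H x i ≤ c * (1 - β) * v i := by
    intro c hc hcc1 x hx hxc i
    have hx0 : ∀ j, 0 ≤ x j := fun j => (hx j).1
    have hL0 : 0 ≤ ∑ j, B i j * x j := Finset.sum_nonneg fun j _ => mul_nonneg (hB i j) (hx0 j)
    have hQ0 : 0 ≤ ∑ j, ∑ k, H i j k * x j * x k := Finset.sum_nonneg fun j _ =>
      Finset.sum_nonneg fun k _ => mul_nonneg (mul_nonneg (hH i j k) (hx0 j)) (hx0 k)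
    -- F x i ≤ ∑ M i j x j + h * Q
    have step1 : SIS h δ B H x i ≤ (∑ j, M i j * x j) + h * ∑ j, ∑ k, H i j k * x j * x k := by
      rw [SIS_eq, sfun, hMdef, M_mulsum]
      have hxi := (hx i)
      nlinarith [mul_nonneg (hx0 i) (add_nonneg hL0 hQ0), mul_nonneg (hx0 i) hL0,
        mul_nonneg (hx0 i) hQ0]
    -- ∑ M i j x j ≤ c * (v i - α)
    have step2 : (∑ j, M i j * x j) ≤ c * (v i - α) := by
      have hsum : ∑ j, M i j * x j ≤ ∑ j, M i j * (c * v j) :=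
        Finset.sum_le_sum fun j _ => mul_le_mul_of_nonneg_left (hxc j) (hM i j)
      have : ∑ j, M i j * (c * v j) = c * ∑ j, M i j * v j := by
        rw [Finset.mul_sum]; exact Finset.sum_congr rfl fun j _ => by ring
      rw [this] at hsum
      have := hvineq i
      nlinarith
    -- Q bound
    have step3 : (∑ j, ∑ k, H i j k * x j * x k) ≤ qm * (c * Vm) ^ 2 := by
      have hb : ∀ j, x j ≤ c * Vm := fun j =>
        le_trans (hxc j) (mul_le_mul_of_nonneg_left (hVle j) hc.le)
      have : ∀ j k, H i j k * x j * x k ≤ H i j k * (c * Vm) ^ 2 := by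
        intro j k
        have h1 : H i j k * x j ≤ H i j k * (c * Vm) :=
          mul_le_mul_of_nonneg_left (hb j) (hH i j k)
        have h2 : H i j k * x j * x k ≤ H i j k * (c * Vm) * (c * Vm) := by
          apply mul_le_mul h1 (hb k) (hx0 k)
          exact mul_nonneg (hH i j k) (mul_nonneg hc.le (by linarith))
        nlinarith [h2]
      calc (∑ j, ∑ k, H i j k * x j * x k) ≤ ∑ j, ∑ k, H i j k * (c * Vm) ^ 2 :=
            Finset.sum_le_sum fun j _ => Finset.sum_le_sum fun k _ => this j k
      _ = (∑ j, ∑ k, H i j k) * (c * Vm) ^ 2 := by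
            rw [Finset.sum_mul]; exact Finset.sum_congr rfl fun j _ => by rw [Finset.sum_mul]
      _ ≤ qm * (c * Vm) ^ 2 := mul_le_mul_of_nonneg_right (hqle i) (by positivity)
    -- combine
    have hP : 0 ≤ h * qm * Vm ^ 2 := mul_nonneg (mul_nonneg hh.le hqm0) (sq_nonneg Vm)
    have hcsq : h * (qm * (c * Vm) ^ 2) ≤ c * (α / 2) := by
      have hcc1' : c * (2 * (h * qm * Vm ^ 2 + 1)) ≤ α := by
        rw [hc1] at hcc1
        rw [le_div_iff₀ (by linarith : (0:ℝ) < 2 * (h * qm * Vm ^ 2 + 1))] at hcc1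
        exact hcc1
      have e0 : c * (2 * (h * qm * Vm ^ 2 + 1)) = 2 * (c * (h * qm * Vm ^ 2)) + 2 * c := by
        ring
      have e1 : c * (h * qm * Vm ^ 2) ≤ α / 2 := by
        rw [e0] at hcc1'
        linarith [hc.le]
      have e2 : h * (qm * (c * Vm) ^ 2) = c * (c * (h * qm * Vm ^ 2)) := by ring
      rw [e2]
      exact mul_le_mul_of_nonneg_left e1 hc.le
    have hvα : c * (v i - α / 2) ≤ c * (1 - β) * v i := by
      have e2 : β * v i ≤ α / 2 := by
        rw [hβ]
        rw [div_mul_eq_mul_div, div_le_div_iff₀ (by linarith) (by norm_num : (0:ℝ) < 2)]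
        have := hVle i
        nlinarith [hv1 i]
      have e3 : (1 - β) * v i = v i - β * v i := by ring
      have e4 : v i - α / 2 ≤ (1 - β) * v i := by rw [e3]; linarith
      calc c * (v i - α / 2) ≤ c * ((1 - β) * v i) := mul_le_mul_of_nonneg_left e4 hc.le
      _ = c * (1 - β) * v i := by ring
    have step3' : h * (∑ j, ∑ k, H i j k * x j * x k) ≤ h * (qm * (c * Vm) ^ 2) :=
      mul_le_mul_of_nonneg_left step3 hh.le
    calc SIS h δ B H x i ≤ c * (v i - α) + h * (qm * (c * Vm) ^ 2) := by linarith
    _ ≤ c * (v i - α) + c * (α / 2) := by linarith [hcsq]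
    _ = c * (v i - α / 2) := by ring
    _ ≤ c * (1 - β) * v i := hvα
  -- now prove stability
  intro ε hε
  set c0 : ℝ := min c1 (ε / (2 * Vm)) with hc0
  have hc0pos : 0 < c0 := lt_min hc1pos (by positivity)
  refine ⟨c0, hc0pos, fun x htraj hcube hnorm => ?_⟩
  have hβ1 : 0 ≤ 1 - β := by linarith
  have hβlt : 1 - β < 1 := by linarith
  -- all iterates in cube
  have hcube' : ∀ t, InCube (x t) := by
    intro t
    induction t with
    | zero => exact hcube
    | succ t ih => rw [htraj t]; exact SIS_incube hh hδ hB hH hA3b ih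
  -- geometric bound
  have hbound : ∀ t, ∀ i, x t i ≤ c0 * (1 - β) ^ t * v i := by
    intro t
    induction t with
    | zero =>
      intro i
      have h1 : |x 0 i| < c0 := by
        have := norm_le_pi_norm (x 0 - 0) i
        simp only [Pi.sub_apply, Pi.zero_apply, sub_zero] at this
        calc |x 0 i| = ‖x 0 i‖ := rfl
        _ ≤ ‖x 0 - 0‖ := by simpa using this
        _ < c0 := hnorm
      have h2 : x 0 i ≤ |x 0 i| := le_abs_self _
      have h3 : c0 ≤ c0 * v i := le_mul_of_one_le_right hc0pos.le (hv1 i)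
      simp only [pow_zero, mul_one]
      linarith
    | succ t ih =>
      intro i
      rw [htraj t]
      have hcpos : 0 < c0 * (1 - β) ^ t := by
        apply mul_pos hc0pos
        apply pow_pos (by linarith)
      have hcle : c0 * (1 - β) ^ t ≤ c1 := by
        have : (1 - β) ^ t ≤ 1 := pow_le_one₀ hβ1 (by linarith)
        have := min_le_left c1 (ε / (2 * Vm))
        nlinarith [hc0pos]
      have := key (c0 * (1 - β) ^ t) hcpos hcle (x t) (hcube' t) (ih) i
      calc SIS h δ B H (x t) i ≤ (c0 * (1 - β) ^ t) * (1 - β) * v i := this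
      _ = c0 * (1 - β) ^ (t + 1) * v i := by ring
  constructor
  · intro t
    have : ‖x t - 0‖ ≤ c0 * Vm := by
      rw [sub_zero]
      rw [pi_norm_le_iff_of_nonneg (by positivity)]
      intro i
      rw [Real.norm_eq_abs, abs_le]
      constructor
      · have := (hcube' t i).1; nlinarith [mul_nonneg hc0pos.le (by linarith : (0:ℝ) ≤ Vm)]
      · have h1 := hbound t i
        have h2 : (1 - β) ^ t ≤ 1 := pow_le_one₀ hβ1 (by linarith)
        have hv0 : (0:ℝ) ≤ v i := by linarith [hv1 i]
        have e1 : (1 - β) ^ t * v i ≤ v i := mul_le_of_le_one_left hv0 h2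
        have e1' : c0 * ((1 - β) ^ t * v i) ≤ c0 * v i :=
          mul_le_mul_of_nonneg_left e1 hc0pos.le
        have e0 : c0 * (1 - β) ^ t * v i = c0 * ((1 - β) ^ t * v i) := by ring
        have e2 : c0 * v i ≤ c0 * Vm := mul_le_mul_of_nonneg_left (hVle i) hc0pos.le
        linarith
    have hlt : c0 * Vm < ε := by
      have h1 : c0 ≤ ε / (2 * Vm) := min_le_right _ _
      have h2 : c0 * Vm ≤ ε / (2 * Vm) * Vm := mul_le_mul_of_nonneg_right h1 (by linarith)
      have h3 : ε / (2 * Vm) * Vm = ε / 2 := by field_simp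
      linarith [h2, h3 ▸ h2]
    linarith [this]
  · rw [tendsto_pi_nhds]
    intro i
    have hgeom : Tendsto (fun t : ℕ => c0 * v i * (1 - β) ^ t) atTop (nhds 0) := by
      have := tendsto_pow_atTop_nhds_zero_of_lt_one hβ1 hβlt
      simpa using (this.const_mul (c0 * v i))
    have h0 : Tendsto (fun _ : ℕ => (0:ℝ)) atTop (nhds 0) := tendsto_const_nhds
    have := tendsto_of_tendsto_of_tendsto_of_le_of_le h0 hgeom
      (fun t => (hcube' t i).1) (fun t => by
        have := hbound t i; calc x t i ≤ c0 * (1 - β) ^ t * v i := this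
        _ = c0 * v i * (1 - β) ^ t := by ring)
    simpa using this

end healthy



section endemic
variable {n : ℕ} {h : ℝ} {δ : Fin n → ℝ} {B : Matrix (Fin n) (Fin n) ℝ}
  {H : Fin n → Fin n → Fin n → ℝ}

lemma iter_fixed (x0 xl : Fin n → ℝ)
    (hconv : Tendsto (fun t => (SIS h δ B H)^[t] x0) atTop (nhds xl)) :
    SIS h δ B H xl = xl := by
  have h1 : Tendsto (fun t => (SIS h δ B H)^[t + 1] x0) atTop (nhds xl) :=
    hconv.comp (tendsto_add_atTop_nat 1)
  have h2 : (fun t => (SIS h δ B H)^[t + 1] x0)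
      = fun t => SIS h δ B H ((SIS h δ B H)^[t] x0) :=
    funext fun t => Function.iterate_succ_apply' _ t x0
  have h3 : Tendsto (fun t => SIS h δ B H ((SIS h δ B H)^[t] x0)) atTop
      (nhds (SIS h δ B H xl)) := (SIS_cont.tendsto xl).comp hconv
  rw [h2] at h1
  exact tendsto_nhds_unique h3 h1

theorem endemic_part (hn : 2 ≤ n) (hh : 0 < h)
    (hδ : ∀ i, 0 < δ i) (hB : ∀ i j, 0 ≤ B i j) (hH : ∀ i j k, 0 ≤ H i j k)
    (hA2 : MatIrred B)
    (hA3b : ∀ i, h * (δ i + (∑ j, B i j) + ∑ j, ∑ k, H i j k) < 1)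
    (z : Fin n → ℝ)
    (hz : ∀ i, ((∃ j k, 0 < H i j k) → z i = 1) ∧ (¬ (∃ j k, 0 < H i j k) → z i = 0))
    (hzne : ∃ i, z i = 1)
    (hθ : ∀ i, z i = 1 →
      (4 : ℝ) ≤ (2 * (∑ j, B i j * z j) + ∑ j, ∑ k, H i j k * z j * z k) / δ i) :
    ∃ xb : Fin n → ℝ, InCube xb ∧ (∀ i, 0 < xb i) ∧
      (∀ i, z i = 1 → (1 : ℝ) / 2 ≤ xb i) ∧
      SIS h δ B H xb = xb ∧ LocAsympStable (SIS h δ B H) xb := by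
  have hn0 : 0 < n := by omega
  haveI : Nonempty (Fin n) := ⟨⟨0, hn0⟩⟩
  have hz01 : ∀ j, z j = 0 ∨ z j = 1 := by
    intro j
    rcases Classical.em (∃ k l, 0 < H j k l) with he | he
    · exact Or.inr ((hz j).1 he)
    · exact Or.inl ((hz j).2 he)
  have hz0 : ∀ j, 0 ≤ z j := fun j => by rcases hz01 j with e | e <;> rw [e] <;> norm_num
  have hz1 : ∀ j, z j ≤ 1 := fun j => by rcases hz01 j with e | e <;> rw [e] <;> norm_num
  -- K invariance
  have Kinv : ∀ x : Fin n → ℝ, InCube x → (∀ j, z j / 2 ≤ x j) →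
      ∀ j, z j / 2 ≤ SIS h δ B H x j := by
    intro x hx hxz j
    rcases hz01 j with e | e
    · rw [e]
      simpa using (SIS_mem hh hδ hB hH hA3b hx j).1
    · rw [e]
      have hsge : δ j ≤ sfun B H x j := by
        have hL : (∑ k, B j k * z k) / 2 ≤ ∑ k, B j k * x k := by
          have h1 : ∑ k, B j k * (z k / 2) ≤ ∑ k, B j k * x k :=
            Finset.sum_le_sum fun k _ => mul_le_mul_of_nonneg_left (hxz k) (hB j k)
          have h2 : ∑ k, B j k * (z k / 2) = (∑ k, B j k * z k) / 2 := by
            rw [Finset.sum_div]; exact Finset.sum_congr rfl fun k _ => by ring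
          linarith [h2 ▸ h1]
        have hQ : (∑ k, ∑ l, H j k l * z k * z l) / 4 ≤ ∑ k, ∑ l, H j k l * x k * x l := by
          have h1 : ∀ k l, H j k l * (z k / 2) * (z l / 2) ≤ H j k l * x k * x l := by
            intro k l
            have e1 : H j k l * (z k / 2) ≤ H j k l * x k :=
              mul_le_mul_of_nonneg_left (hxz k) (hH j k l)
            have e2 : 0 ≤ z l / 2 := by linarith [hz0 l]
            have e3 : 0 ≤ H j k l * x k := mul_nonneg (hH j k l) (hx k).1
            exact mul_le_mul e1 (hxz l) e2 e3
          have h2 : ∑ k, ∑ l, H j k l * (z k / 2) * (z l / 2)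
              = (∑ k, ∑ l, H j k l * z k * z l) / 4 := by
            rw [Finset.sum_div]
            refine Finset.sum_congr rfl fun k _ => ?_
            rw [Finset.sum_div]
            exact Finset.sum_congr rfl fun l _ => by ring
          calc (∑ k, ∑ l, H j k l * z k * z l) / 4
              = ∑ k, ∑ l, H j k l * (z k / 2) * (z l / 2) := h2.symm
          _ ≤ ∑ k, ∑ l, H j k l * x k * x l :=
              Finset.sum_le_sum fun k _ => Finset.sum_le_sum fun l _ => h1 k l
        have hθj : 4 * δ j ≤ 2 * (∑ k, B j k * z k) + ∑ k, ∑ l, H j k l * z k * z l :=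
          (le_div_iff₀ (hδ j)).1 (hθ j e)
        rw [sfun]
        linarith
    -- now 1/2 ≤ SIS x j
      have hxj : 1 / 2 ≤ x j := by have := hxz j; rw [e] at this; linarith
      have hlt := hs_lt hh hA3b hB hH hx j
      rw [SIS_eq]
      nlinarith [mul_nonneg (by linarith : (0:ℝ) ≤ x j - 1/2)
        (by linarith : (0:ℝ) ≤ 1 - h * δ j - h * sfun B H x j), hh.le]
  -- iterates from the top
  set y : ℕ → Fin n → ℝ := fun t => (SIS h δ B H)^[t] (fun _ => (1 : ℝ)) with hy
  have ysucc : ∀ t, y (t + 1) = SIS h δ B H (y t) := by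
    intro t; rw [hy]; exact Function.iterate_succ_apply' _ t _
  have ycube : ∀ t, InCube (y t) := by
    intro t
    induction t with
    | zero => intro i; simp [hy]
    | succ t ih => rw [ysucc]; exact SIS_incube hh hδ hB hH hA3b ih
  have yhalf : ∀ t j, z j / 2 ≤ y t j := by
    intro t
    induction t with
    | zero => intro j; simp [hy]; linarith [hz1 j]
    | succ t ih => rw [ysucc]; exact Kinv (y t) (ycube t) ih
  have ydec : ∀ t i, y (t + 1) i ≤ y t i := by
    intro t
    induction t with
    | zero =>
      intro i
      have h1 := (SIS_mem hh hδ hB hH hA3b (ycube 0) i).2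
      rw [ysucc 0]
      have h2 : y 0 i = 1 := by simp [hy]
      rw [h2]
      nlinarith [hδ i, hh]
    | succ t ih =>
      intro i
      calc y (t + 1 + 1) i = SIS h δ B H (y (t + 1)) i := congrFun (ysucc (t + 1)) i
      _ ≤ SIS h δ B H (y t) i := SIS_mono hh hδ hB hH hA3b (ycube (t+1)) (ycube t) ih i
      _ = y (t + 1) i := (congrFun (ysucc t) i).symm
  have yanti : ∀ i, Antitone fun t => y t i := fun i =>
    antitone_nat_of_succ_le fun t => ydec t i
  have ybdd : ∀ i, BddBelow (Set.range fun t => y t i) := by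
    intro i
    exact ⟨0, by rintro a ⟨t, rfl⟩; exact (ycube t i).1⟩
  set xb : Fin n → ℝ := fun i => ⨅ t, y t i with hxbdef
  have ytend : ∀ i, Tendsto (fun t => y t i) atTop (nhds (xb i)) := fun i =>
    tendsto_atTop_ciInf (yanti i) (ybdd i)
  have ytendPi : Tendsto y atTop (nhds xb) := tendsto_pi_nhds.2 ytend
  have hfix : SIS h δ B H xb = xb := iter_fixed _ xb ytendPi
  have hxb_le : ∀ t i, xb i ≤ y t i := fun t i => ciInf_le (ybdd i) t
  have hxb0 : ∀ i, 0 ≤ xb i := fun i => le_ciInf fun t => (ycube t i).1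
  have hxbz : ∀ j, z j / 2 ≤ xb j := fun j => le_ciInf fun t => yhalf t j
  have hxb1 : ∀ i, xb i ≤ 1 := fun i => le_trans (hxb_le 0 i) (by simp [hy])
  have hxbcube : InCube xb := fun i => ⟨hxb0 i, hxb1 i⟩
  have hxbhalf : ∀ i, z i = 1 → 1 / 2 ≤ xb i := by
    intro i e; have := hxbz i; rw [e] at this; linarith
  -- coordinatewise fixed point relation
  have hfixc : ∀ i, δ i * xb i =
      (1 - xb i) * ((∑ j, B i j * xb j) + ∑ j, ∑ k, H i j k * xb j * xb k) := by
    intro i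
    have e0 := congrFun hfix i
    rw [SIS_eq] at e0
    have e1 : h * (-(δ i * xb i) + (1 - xb i) * sfun B H xb i) = 0 := by linarith
    have e2 : -(δ i * xb i) + (1 - xb i) * sfun B H xb i = 0 := by
      rcases mul_eq_zero.1 e1 with h' | h'
      · exact absurd h' hh.ne'
      · exact h'
    rw [sfun] at e2
    linarith
  -- positivity
  have hpos : ∀ i, 0 < xb i := by
    by_contra hcon
    push_neg at hcon
    obtain ⟨i0, hi0⟩ := hcon
    have hi0' : xb i0 = 0 := le_antisymm hi0 (hxb0 i0)
    set S : Set (Fin n) := {i | xb i = 0} with hS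
    have hSne : S.Nonempty := ⟨i0, hi0'⟩
    have hSnuniv : S ≠ Set.univ := by
      obtain ⟨i1, hi1⟩ := hzne
      intro hcontr
      have : xb i1 = 0 := by
        have hmem : i1 ∈ S := by rw [hcontr]; trivial
        exact hmem
      have := hxbhalf i1 hi1
      linarith
    obtain ⟨i, hiS, j, hjS, hBij⟩ := hA2 S hSne hSnuniv
    have hxbi : xb i = 0 := hiS
    have hsfz : (∑ k, B i k * xb k) + ∑ k, ∑ l, H i k l * xb k * xb l = 0 := by
      have := hfixc i
      rw [hxbi] at this
      simp at this
      linarith [this]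
    have hL0 : ∑ k, B i k * xb k = 0 := by
      have hLnn : 0 ≤ ∑ k, B i k * xb k :=
        Finset.sum_nonneg fun k _ => mul_nonneg (hB i k) (hxb0 k)
      have hQnn : 0 ≤ ∑ k, ∑ l, H i k l * xb k * xb l :=
        Finset.sum_nonneg fun k _ => Finset.sum_nonneg fun l _ =>
          mul_nonneg (mul_nonneg (hH i k l) (hxb0 k)) (hxb0 l)
      linarith
    have hterm : B i j * xb j = 0 := by
      have := (Finset.sum_eq_zero_iff_of_nonneg
        (fun k _ => mul_nonneg (hB i k) (hxb0 k))).1 hL0 j (Finset.mem_univ j)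
      exact this
    have hBij' : 0 < B i j := lt_of_le_of_ne (hB i j) (Ne.symm hBij)
    have hxbj : xb j = 0 := by
      rcases mul_eq_zero.1 hterm with h' | h'
      · exact absurd h' hBij'.ne'
      · exact h'
    exact hjS hxbj
  have hxlt : ∀ i, xb i ≤ 1 - h * δ i := by
    intro i
    have := (SIS_mem hh hδ hB hH hA3b hxbcube i).2
    rw [congrFun hfix i] at this
    exact this
  -- Lb positivity
  have hLbpos : ∀ i, 0 < ∑ j, B i j * xb j := by
    intro i
    have hSne : ({i} : Set (Fin n)).Nonempty := ⟨i, rfl⟩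
    have hSnuniv : ({i} : Set (Fin n)) ≠ Set.univ := by
      intro hcontr
      have h01 : (⟨0, by omega⟩ : Fin n) ≠ (⟨1, by omega⟩ : Fin n) := by
        intro e; simpa using congrArg Fin.val e
      have e0 : (⟨0, by omega⟩ : Fin n) ∈ ({i} : Set (Fin n)) := by rw [hcontr]; trivial
      have e1 : (⟨1, by omega⟩ : Fin n) ∈ ({i} : Set (Fin n)) := by rw [hcontr]; trivial
      rw [Set.mem_singleton_iff] at e0 e1
      exact h01 (e0.trans e1.symm)
    obtain ⟨i', hi', j, hjS, hBij⟩ := hA2 {i} hSne hSnuniv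
    rw [Set.mem_singleton_iff] at hi'
    subst hi'
    have hBij' : 0 < B i' j := lt_of_le_of_ne (hB i' j) (Ne.symm hBij)
    have h1 : 0 < B i' j * xb j := mul_pos hBij' (hpos j)
    have h2 : B i' j * xb j ≤ ∑ k, B i' k * xb k :=
      Finset.single_le_sum (fun k _ => mul_nonneg (hB i' k) (hxb0 k)) (Finset.mem_univ j)
    linarith
  have hQbnn : ∀ i, 0 ≤ ∑ j, ∑ k, H i j k * xb j * xb k := fun i =>
    Finset.sum_nonneg fun j _ => Finset.sum_nonneg fun k _ =>
      mul_nonneg (mul_nonneg (hH i j k) (hxb0 j)) (hxb0 k)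
  have hQb0 : ∀ i, z i = 0 → ∑ j, ∑ k, H i j k * xb j * xb k = 0 := by
    intro i e
    have hne : ¬ (∃ j k, 0 < H i j k) := by
      intro he
      have := (hz i).1 he
      rw [e] at this
      norm_num at this
    push_neg at hne
    refine Finset.sum_eq_zero fun j _ => Finset.sum_eq_zero fun k _ => ?_
    have : H i j k = 0 := le_antisymm (hne j k) (hH i j k)
    rw [this]; ring
  have hcase : ∀ i, (∑ j, ∑ k, H i j k * xb j * xb k) = 0 ∨ 1 / 2 ≤ xb i := by
    intro i
    rcases hz01 i with e | e
    · exact Or.inl (hQb0 i e)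
    · exact Or.inr (hxbhalf i e)
  have hGpos : ∀ i, 0 < (∑ j, B i j * xb j) * xb i := fun i =>
    mul_pos (hLbpos i) (hpos i)
  -- the epsilon
  set εh : ℝ := min (1/2) (Finset.univ.inf' Finset.univ_nonempty
    (fun i => min (h * δ i)
      ((∑ j, B i j * xb j) * xb i / ((∑ j, ∑ k, H i j k * xb j * xb k) + 1)))) with hεhdef
  have hεh0 : 0 < εh := by
    rw [hεhdef]
    apply lt_min (by norm_num)
    rw [Finset.lt_inf'_iff]
    intro i _
    apply lt_min (mul_pos hh (hδ i))
    apply div_pos (hGpos i)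
    linarith [hQbnn i]
  have hεh_half : εh ≤ 1/2 := min_le_left _ _
  have hεh_δ : ∀ i, εh ≤ h * δ i := by
    intro i
    refine le_trans (min_le_right _ _) (le_trans (Finset.inf'_le _ (Finset.mem_univ i)) ?_)
    exact min_le_left _ _
  have hεh_Q : ∀ i, εh * (∑ j, ∑ k, H i j k * xb j * xb k) ≤ (∑ j, B i j * xb j) * xb i := by
    intro i
    have h1 : εh ≤ (∑ j, B i j * xb j) * xb i / ((∑ j, ∑ k, H i j k * xb j * xb k) + 1) :=
      le_trans (min_le_right _ _)
        (le_trans (Finset.inf'_le _ (Finset.mem_univ i)) (min_le_right _ _))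
    rw [le_div_iff₀ (by linarith [hQbnn i])] at h1
    nlinarith [hεh0, hQbnn i]
  have hupper : ∀ i, (1 + εh) * xb i ≤ 1 := by
    intro i
    have h1 := hxlt i
    have h2 := hεh_δ i
    have h3 := hxb0 i
    nlinarith [mul_nonneg hεh0.le h3]
  -- sub/super solutions
  have subF : ∀ l : ℝ, 1 - εh ≤ l → l ≤ 1 → ∀ i,
      l * xb i + (1 - l) * (h * ((∑ j, B i j * xb j) * xb i) / 4)
        ≤ SIS h δ B H (fun j => l * xb j) i := by
    intro l hl1 hl2 i
    rw [scale_identity h δ B H xb i l (hfixc i)]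
    have hεQ : (1 - l) * (∑ j, ∑ k, H i j k * xb j * xb k) ≤ (∑ j, B i j * xb j) * xb i := by
      have : (1 - l) * (∑ j, ∑ k, H i j k * xb j * xb k)
          ≤ εh * (∑ j, ∑ k, H i j k * xb j * xb k) :=
        mul_le_mul_of_nonneg_right (by linarith) (hQbnn i)
      linarith [hεh_Q i]
    have hbr := sub_bracket (hQbnn i) (hcase i) (by linarith : 1/2 ≤ l) hl2 hεQ
      (hxb0 i) (hGpos i).le
    have hpu := push_up hh (by linarith : 1/2 ≤ l) hl2 hbr (hGpos i).le
    linarith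
  have superF : ∀ l : ℝ, 1 ≤ l → l ≤ 1 + εh → ∀ i,
      SIS h δ B H (fun j => l * xb j) i
        ≤ l * xb i - (l - 1) * (h * ((∑ j, B i j * xb j) * xb i) / 4) := by
    intro l hl1 hl2 i
    rw [scale_identity h δ B H xb i l (hfixc i)]
    have hbr := super_bracket (hQbnn i) (hcase i) hl1 (hxb0 i) (hGpos i).le
    have hpd := push_down hh hl1 hbr (hGpos i).le
    linarith
  -- conclusion
  refine ⟨xb, hxbcube, hpos, hxbhalf, hfix, ?_⟩
  intro ε hε
  set ε' : ℝ := min εh (ε / 2) with hε'def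
  have hε'0 : 0 < ε' := lt_min hεh0 (by linarith)
  have hε'h : ε' ≤ εh := min_le_left _ _
  have hε'ε : ε' ≤ ε / 2 := min_le_right _ _
  set u0 : Fin n → ℝ := fun j => (1 - ε') * xb j with hu0def
  set w0 : Fin n → ℝ := fun j => (1 + ε') * xb j with hw0def
  have hu0cube : InCube u0 := by
    intro i
    constructor
    · exact mul_nonneg (by linarith [hεh_half]) (hxb0 i)
    · calc (1 - ε') * xb i ≤ 1 * xb i :=
          mul_le_mul_of_nonneg_right (by linarith) (hxb0 i)
      _ ≤ 1 := by rw [one_mul]; exact hxb1 i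
  have hw0cube : InCube w0 := by
    intro i
    constructor
    · exact mul_nonneg (by linarith) (hxb0 i)
    · calc (1 + ε') * xb i ≤ (1 + εh) * xb i :=
          mul_le_mul_of_nonneg_right (by linarith) (hxb0 i)
      _ ≤ 1 := hupper i
  set u : ℕ → Fin n → ℝ := fun t => (SIS h δ B H)^[t] u0 with hudef
  set w : ℕ → Fin n → ℝ := fun t => (SIS h δ B H)^[t] w0 with hwdef
  have usucc : ∀ t, u (t + 1) = SIS h δ B H (u t) := fun t =>
    Function.iterate_succ_apply' _ t _
  have wsucc : ∀ t, w (t + 1) = SIS h δ B H (w t) := fun t =>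
    Function.iterate_succ_apply' _ t _
  have ucube : ∀ t, InCube (u t) := by
    intro t; induction t with
    | zero => exact hu0cube
    | succ t ih => rw [usucc]; exact SIS_incube hh hδ hB hH hA3b ih
  have wcube : ∀ t, InCube (w t) := by
    intro t; induction t with
    | zero => exact hw0cube
    | succ t ih => rw [wsucc]; exact SIS_incube hh hδ hB hH hA3b ih
  have ulexb : ∀ t i, u t i ≤ xb i := by
    intro t; induction t with
    | zero =>
      intro i
      calc (1 - ε') * xb i ≤ 1 * xb i :=
          mul_le_mul_of_nonneg_right (by linarith) (hxb0 i)
      _ = xb i := one_mul _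
    | succ t ih =>
      intro i
      rw [usucc]
      calc SIS h δ B H (u t) i ≤ SIS h δ B H xb i :=
        SIS_mono hh hδ hB hH hA3b (ucube t) hxbcube ih i
      _ = xb i := congrFun hfix i
  have wgexb : ∀ t i, xb i ≤ w t i := by
    intro t; induction t with
    | zero =>
      intro i
      calc xb i = 1 * xb i := (one_mul _).symm
      _ ≤ (1 + ε') * xb i := mul_le_mul_of_nonneg_right (by linarith) (hxb0 i)
    | succ t ih =>
      intro i
      rw [wsucc]
      calc xb i = SIS h δ B H xb i := (congrFun hfix i).symm
      _ ≤ SIS h δ B H (w t) i := SIS_mono hh hδ hB hH hA3b hxbcube (wcube t) ih i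
  have uinc : ∀ t i, u t i ≤ u (t + 1) i := by
    intro t; induction t with
    | zero =>
      intro i
      rw [usucc]
      have := subF (1 - ε') (by linarith) (by linarith) i
      have hγ : 0 ≤ ε' * (h * ((∑ j, B i j * xb j) * xb i) / 4) :=
        mul_nonneg hε'0.le (div_nonneg (mul_nonneg hh.le (hGpos i).le) (by norm_num))
      calc u 0 i = (1 - ε') * xb i := rfl
      _ ≤ (1 - ε') * xb i + (1 - (1 - ε')) * (h * ((∑ j, B i j * xb j) * xb i) / 4) := by
          have e : (1 - (1 - ε')) = ε' := by ring
          rw [e]; linarith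
      _ ≤ SIS h δ B H (fun j => (1 - ε') * xb j) i := this
      _ = SIS h δ B H (u 0) i := rfl
    | succ t ih =>
      intro i
      calc u (t + 1) i = SIS h δ B H (u t) i := congrFun (usucc t) i
      _ ≤ SIS h δ B H (u (t + 1)) i :=
          SIS_mono hh hδ hB hH hA3b (ucube t) (ucube (t+1)) ih i
      _ = u (t + 1 + 1) i := (congrFun (usucc (t + 1)) i).symm
  have wdec : ∀ t i, w (t + 1) i ≤ w t i := by
    intro t; induction t with
    | zero =>
      intro i
      rw [wsucc]
      have := superF (1 + ε') (by linarith) (by linarith) i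
      have hγ : 0 ≤ ε' * (h * ((∑ j, B i j * xb j) * xb i) / 4) :=
        mul_nonneg hε'0.le (div_nonneg (mul_nonneg hh.le (hGpos i).le) (by norm_num))
      calc SIS h δ B H (w 0) i = SIS h δ B H (fun j => (1 + ε') * xb j) i := rfl
      _ ≤ (1 + ε') * xb i - ((1 + ε') - 1) * (h * ((∑ j, B i j * xb j) * xb i) / 4) := this
      _ ≤ (1 + ε') * xb i := by
          have e : ((1 + ε') - 1) = ε' := by ring
          rw [e]; linarith
      _ = w 0 i := rfl
    | succ t ih =>
      intro i
      calc w (t + 1 + 1) i = SIS h δ B H (w (t + 1)) i := congrFun (wsucc (t + 1)) i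
      _ ≤ SIS h δ B H (w t) i :=
          SIS_mono hh hδ hB hH hA3b (wcube (t+1)) (wcube t) ih i
      _ = w (t + 1) i := (congrFun (wsucc t) i).symm
  have umono : ∀ i, Monotone fun t => u t i := fun i =>
    monotone_nat_of_le_succ fun t => uinc t i
  have wanti : ∀ i, Antitone fun t => w t i := fun i =>
    antitone_nat_of_succ_le fun t => wdec t i
  have ubdd : ∀ i, BddAbove (Set.range fun t => u t i) := fun i =>
    ⟨xb i, by rintro a ⟨t, rfl⟩; exact ulexb t i⟩
  have wbdd : ∀ i, BddBelow (Set.range fun t => w t i) := fun i =>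
    ⟨xb i, by rintro a ⟨t, rfl⟩; exact wgexb t i⟩
  set p : Fin n → ℝ := fun i => ⨆ t, u t i with hpdef
  set q : Fin n → ℝ := fun i => ⨅ t, w t i with hqdef
  have utend : ∀ i, Tendsto (fun t => u t i) atTop (nhds (p i)) := fun i =>
    tendsto_atTop_ciSup (umono i) (ubdd i)
  have wtend : ∀ i, Tendsto (fun t => w t i) atTop (nhds (q i)) := fun i =>
    tendsto_atTop_ciInf (wanti i) (wbdd i)
  have utendPi : Tendsto u atTop (nhds p) := tendsto_pi_nhds.2 utend
  have wtendPi : Tendsto w atTop (nhds q) := tendsto_pi_nhds.2 wtend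
  have pfix : SIS h δ B H p = p := iter_fixed _ p utendPi
  have qfix : SIS h δ B H q = q := iter_fixed _ q wtendPi
  have hple : ∀ i, p i ≤ xb i := fun i => ciSup_le fun t => ulexb t i
  have hpge : ∀ i, u 0 i ≤ p i := fun i => le_ciSup (ubdd i) 0
  have hqge : ∀ i, xb i ≤ q i := fun i => le_ciInf fun t => wgexb t i
  have hqle : ∀ i, q i ≤ w 0 i := fun i => ciInf_le (wbdd i) 0
  have hule : ∀ t i, u t i ≤ p i := fun t i => le_ciSup (ubdd i) t
  have hwge : ∀ t i, q i ≤ w t i := fun t i => ciInf_le (wbdd i) t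
  have hpcube : InCube p := by
    intro i
    exact ⟨le_trans (hu0cube i).1 (hpge i), le_trans (hple i) (hxb1 i)⟩
  have hqcube : InCube q := by
    intro i
    exact ⟨le_trans (hxb0 i) (hqge i), le_trans (hqle i) (hw0cube i).2⟩
  -- p = xb
  have hpeq : p = xb := by
    set lam : ℝ := Finset.univ.inf' Finset.univ_nonempty (fun i => p i / xb i) with hlamdef
    have hlam_le : ∀ i, lam * xb i ≤ p i := by
      intro i
      have h1 : lam ≤ p i / xb i := Finset.inf'_le _ (Finset.mem_univ i)
      rwa [le_div_iff₀ (hpos i)] at h1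
    have hlam_ge : 1 - ε' ≤ lam := by
      rw [hlamdef, Finset.le_inf'_iff]
      intro i _
      rw [le_div_iff₀ (hpos i)]
      exact hpge i
    have hlamnotlt : ¬ lam < 1 := by
      intro hlt
      obtain ⟨i0, _, heq⟩ := Finset.exists_mem_eq_inf' (Finset.univ_nonempty)
        (fun i => p i / xb i)
      rw [← hlamdef] at heq
      have hpi0 : p i0 = lam * xb i0 := by
        rw [heq, div_mul_cancel₀ _ (hpos i0).ne']
      have hlamcube : InCube (fun j => lam * xb j) := by
        intro j
        constructor
        · exact mul_nonneg (by linarith [hεh_half, hε'h]) (hxb0 j)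
        · calc lam * xb j ≤ 1 * xb j :=
            mul_le_mul_of_nonneg_right hlt.le (hxb0 j)
          _ ≤ 1 := by rw [one_mul]; exact hxb1 j
      have hmono := SIS_mono hh hδ hB hH hA3b hlamcube hpcube hlam_le i0
      have hsub := subF lam (by linarith [hε'h]) hlt.le i0
      have hγpos : 0 < (1 - lam) * (h * ((∑ j, B i0 j * xb j) * xb i0) / 4) :=
        mul_pos (by linarith) (div_pos (mul_pos hh (hGpos i0)) (by norm_num))
      rw [congrFun pfix i0] at hmono
      linarith [hsub, hmono, hpi0]
    have hlam1 : 1 ≤ lam := not_lt.1 hlamnotlt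
    funext i
    have : xb i ≤ p i := by
      calc xb i = 1 * xb i := (one_mul _).symm
      _ ≤ lam * xb i := mul_le_mul_of_nonneg_right hlam1 (hxb0 i)
      _ ≤ p i := hlam_le i
    exact le_antisymm (hple i) this
  -- q = xb
  have hqeq : q = xb := by
    set mu : ℝ := Finset.univ.sup' Finset.univ_nonempty (fun i => q i / xb i) with hmudef
    have hmu_ge : ∀ i, q i ≤ mu * xb i := by
      intro i
      have h1 : q i / xb i ≤ mu := Finset.le_sup' (fun i => q i / xb i) (Finset.mem_univ i)
      rwa [div_le_iff₀ (hpos i)] at h1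
    have hmu_le : mu ≤ 1 + ε' := by
      rw [hmudef, Finset.sup'_le_iff]
      intro i _
      rw [div_le_iff₀ (hpos i)]
      exact hqle i
    have hmunotgt : ¬ 1 < mu := by
      intro hlt
      obtain ⟨i0, _, heq⟩ := Finset.exists_mem_eq_sup' (Finset.univ_nonempty)
        (fun i => q i / xb i)
      rw [← hmudef] at heq
      have hqi0 : q i0 = mu * xb i0 := by
        rw [heq, div_mul_cancel₀ _ (hpos i0).ne']
      have hmucube : InCube (fun j => mu * xb j) := by
        intro j
        constructor
        · exact mul_nonneg (by linarith) (hxb0 j)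
        · calc mu * xb j ≤ (1 + εh) * xb j :=
            mul_le_mul_of_nonneg_right (by linarith [hε'h]) (hxb0 j)
          _ ≤ 1 := hupper j
      have hmono := SIS_mono hh hδ hB hH hA3b hqcube hmucube hmu_ge i0
      have hsuper := superF mu hlt.le (by linarith [hε'h]) i0
      have hγpos : 0 < (mu - 1) * (h * ((∑ j, B i0 j * xb j) * xb i0) / 4) :=
        mul_pos (by linarith) (div_pos (mul_pos hh (hGpos i0)) (by norm_num))
      rw [congrFun qfix i0] at hmono
      linarith [hsuper, hmono, hqi0]
    have hmu1 : mu ≤ 1 := not_lt.1 hmunotgt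
    funext i
    have : q i ≤ xb i := by
      calc q i ≤ mu * xb i := hmu_ge i
      _ ≤ 1 * xb i := mul_le_mul_of_nonneg_right hmu1 (hxb0 i)
      _ = xb i := one_mul _
    exact le_antisymm this (hqge i)
  -- the neighbourhood
  set mX : ℝ := Finset.univ.inf' Finset.univ_nonempty xb with hmXdef
  have hmX0 : 0 < mX := by
    rw [hmXdef, Finset.lt_inf'_iff]
    exact fun i _ => hpos i
  have hmXle : ∀ i, mX ≤ xb i := fun i => Finset.inf'_le _ (Finset.mem_univ i)
  refine ⟨ε' * mX, mul_pos hε'0 hmX0, fun x htraj hx0cube hnorm => ?_⟩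
  -- initial sandwich
  have hinit : ∀ i, u 0 i ≤ x 0 i ∧ x 0 i ≤ w 0 i := by
    intro i
    have h1 : |x 0 i - xb i| < ε' * mX := by
      have := norm_le_pi_norm (x 0 - xb) i
      simp only [Pi.sub_apply] at this
      calc |x 0 i - xb i| = ‖x 0 i - xb i‖ := rfl
      _ ≤ ‖x 0 - xb‖ := this
      _ < ε' * mX := hnorm
    have h2 : ε' * mX ≤ ε' * xb i := mul_le_mul_of_nonneg_left (hmXle i) hε'0.le
    rw [abs_lt] at h1
    constructor
    · have : u 0 i = xb i - ε' * xb i := by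
        show (1 - ε') * xb i = _
        ring
      rw [this]; linarith
    · have : w 0 i = xb i + ε' * xb i := by
        show (1 + ε') * xb i = _
        ring
      rw [this]; linarith
  -- sandwich for all t
  have hsand : ∀ t, InCube (x t) ∧ (∀ i, u t i ≤ x t i) ∧ (∀ i, x t i ≤ w t i) := by
    intro t
    induction t with
    | zero => exact ⟨hx0cube, fun i => (hinit i).1, fun i => (hinit i).2⟩
    | succ t ih =>
      obtain ⟨hc, hul, hwu⟩ := ih
      refine ⟨?_, ?_, ?_⟩
      · rw [htraj t]; exact SIS_incube hh hδ hB hH hA3b hc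
      · intro i
        rw [htraj t, usucc t]
        exact SIS_mono hh hδ hB hH hA3b (ucube t) hc hul i
      · intro i
        rw [htraj t, wsucc t]
        exact SIS_mono hh hδ hB hH hA3b hc (wcube t) hwu i
  constructor
  · intro t
    have hb : ‖x t - xb‖ ≤ ε' := by
      rw [pi_norm_le_iff_of_nonneg hε'0.le]
      intro i
      rw [Real.norm_eq_abs, Pi.sub_apply, abs_le]
      have hεx : ε' * xb i ≤ ε' := by
        calc ε' * xb i ≤ ε' * 1 := mul_le_mul_of_nonneg_left (hxb1 i) hε'0.le
        _ = ε' := mul_one _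
      constructor
      · have h1 : u 0 i ≤ u t i := umono i (Nat.zero_le t)
        have h2 := (hsand t).2.1 i
        have h3 : u 0 i = xb i - ε' * xb i := by
          show (1 - ε') * xb i = _
          ring
        linarith
      · have h1 : w t i ≤ w 0 i := wanti i (Nat.zero_le t)
        have h2 := (hsand t).2.2 i
        have h3 : w 0 i = xb i + ε' * xb i := by
          show (1 + ε') * xb i = _
          ring
        linarith
    linarith [hε'ε]
  · rw [tendsto_pi_nhds]
    intro i
    have hu' : Tendsto (fun t => u t i) atTop (nhds (xb i)) := by
      have := utend i
      rw [hpeq] at this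
      exact this
    have hw' : Tendsto (fun t => w t i) atTop (nhds (xb i)) := by
      have := wtend i
      rw [hqeq] at this
      exact this
    exact tendsto_of_tendsto_of_tendsto_of_le_of_le hu' hw'
      (fun t => (hsand t).2.1 i) (fun t => (hsand t).2.2 i)

end endemic


/-- Bistability: if `ρ(I − hD + hB) < 1` and
`θ = min_{i : z_i = 1} (2Σ_j β_{ij} z_j + Σ_{j,k} β_{ijk} z_j z_k)/δ_i ≥ 4`, then the
healthy state is locally asymptotically stable and there is a locally asymptotically
stable endemic equilibrium `x̄ ≫ 0` with `x̄_i ≥ 1/2` whenever `z_i = 1`. -/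
theorem stmt2 {n : ℕ} (hn : 2 ≤ n) (h : ℝ) (hh : 0 < h)
    (δ : Fin n → ℝ) (B : Matrix (Fin n) (Fin n) ℝ) (H : Fin n → Fin n → Fin n → ℝ)
    (hδ : ∀ i, 0 < δ i) (hB : ∀ i j, 0 ≤ B i j) (hH : ∀ i j k, 0 ≤ H i j k)
    (hA2 : MatIrred B)
    (hA3b : ∀ i, h * (δ i + (∑ j, B i j) + ∑ j, ∑ k, H i j k) < 1)
    (z : Fin n → ℝ)
    (hz : ∀ i, ((∃ j k, 0 < H i j k) → z i = 1) ∧ (¬ (∃ j k, 0 < H i j k) → z i = 0))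
    (hzne : ∃ i, z i = 1)
    (hρ : specRad ((1 : Matrix (Fin n) (Fin n) ℝ) - h • Matrix.diagonal δ + h • B) < 1)
    (hθ : ∀ i, z i = 1 →
      (4 : ℝ) ≤ (2 * (∑ j, B i j * z j) + ∑ j, ∑ k, H i j k * z j * z k) / δ i) :
    LocAsympStable (SIS h δ B H) 0 ∧
    ∃ xb : Fin n → ℝ, InCube xb ∧ (∀ i, 0 < xb i) ∧
      (∀ i, z i = 1 → (1 : ℝ) / 2 ≤ xb i) ∧
      SIS h δ B H xb = xb ∧ LocAsympStable (SIS h δ B H) xb :=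
  ⟨healthy_stable hn h hh δ B H hδ hB hH hA3b hρ,
   endemic_part hn hh hδ hB hH hA2 hA3b z hz hzne hθ⟩
end

section
/- Under Assumptions A2 and A3a, suppose in addition that the array H is irreducible. (a) If Σ_j β_{ij} < δ_i < Σ_j β_{ij} + Σ_{j,k} β_{ijk} for all i, then the healthy state 0 is locally asymptotically stable and every trajectory with x(0) ∈ [0,1]^n and max_i |x_i(0)| < α₁ converges to 0, where α₁ = min_i (δ_i − Σ_j β_{ij})/(Σ_{j,k} β_{ijk}). (b) If δ_i > Σ_j β_{ij} + Σ_{j,k} β_{ijk} for all i, then the healthy state is globally asymptotically stable on [0,1]^n: it is locally asymptotically stable and every trajectory with x(0) ∈ [0,1]^n converges to 0. -/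
open Finset Filter

/-- One-step estimate: if all coordinates are in `[0,1]` and bounded by `m ≤ M`, then
the image under the SIS map stays in `[0,1]` and each coordinate is bounded by
`(1 - h (δ_i - Σ_j β_{ij} - M Σ_{jk} β_{ijk})) m`. -/
lemma sis_step {n : ℕ} {h : ℝ} (hh : 0 < h) {δ : Fin n → ℝ}
    {B : Matrix (Fin n) (Fin n) ℝ} {H : Fin n → Fin n → Fin n → ℝ}
    (hδ : ∀ i, 0 < δ i) (hB : ∀ i j, 0 ≤ B i j) (hH : ∀ i j k, 0 ≤ H i j k)
    (hA3a : ∀ i, h * δ i ≤ 1 ∧ h * ((∑ j, B i j) + ∑ j, ∑ k, H i j k) ≤ 1)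
    {x : Fin n → ℝ} (hx : InCube x) {m M : ℝ} (hm0 : 0 ≤ m) (hmM : m ≤ M)
    (hxm : ∀ i, x i ≤ m) (i : Fin n) :
    0 ≤ SIS h δ B H x i ∧ SIS h δ B H x i ≤ 1 ∧
      SIS h δ B H x i ≤ (1 - h * (δ i - (∑ j, B i j) - M * ∑ j, ∑ k, H i j k)) * m := by
  set S : ℝ := (∑ j, B i j * x j) + ∑ j, ∑ k, H i j k * x j * x k with hSdef
  have hx0 : ∀ j, 0 ≤ x j := fun j => (hx j).1
  have hx1 : ∀ j, x j ≤ 1 := fun j => (hx j).2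
  have hS0 : 0 ≤ S := by
    apply add_nonneg
    · exact Finset.sum_nonneg fun j _ => mul_nonneg (hB i j) (hx0 j)
    · exact Finset.sum_nonneg fun j _ => Finset.sum_nonneg fun k _ =>
        mul_nonneg (mul_nonneg (hH i j k) (hx0 j)) (hx0 k)
  have hSB : (∑ j, B i j * x j) ≤ (∑ j, B i j) * m := by
    rw [Finset.sum_mul]
    exact Finset.sum_le_sum fun j _ => mul_le_mul_of_nonneg_left (hxm j) (hB i j)
  have hSH : (∑ j, ∑ k, H i j k * x j * x k) ≤ (∑ j, ∑ k, H i j k) * (m * M) := by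
    rw [Finset.sum_mul]
    refine Finset.sum_le_sum fun j _ => ?_
    rw [Finset.sum_mul]
    refine Finset.sum_le_sum fun k _ => ?_
    rw [mul_assoc]
    exact mul_le_mul_of_nonneg_left
      (mul_le_mul (hxm j) ((hxm k).trans hmM) (hx0 k) hm0) (hH i j k)
  have hSB1 : (∑ j, B i j * x j) ≤ ∑ j, B i j :=
    Finset.sum_le_sum fun j _ => by
      nlinarith [hB i j, hx0 j, hx1 j]
  have hSH1 : (∑ j, ∑ k, H i j k * x j * x k) ≤ ∑ j, ∑ k, H i j k :=
    Finset.sum_le_sum fun j _ => Finset.sum_le_sum fun k _ => by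
      have h1 : x j * x k ≤ 1 := by nlinarith [hx0 j, hx1 j, hx0 k, hx1 k]
      have h0' : 0 ≤ x j * x k := mul_nonneg (hx0 j) (hx0 k)
      calc H i j k * x j * x k = H i j k * (x j * x k) := by ring
        _ ≤ H i j k * 1 := mul_le_mul_of_nonneg_left h1 (hH i j k)
        _ = H i j k := mul_one _
  have heq : SIS h δ B H x i = x i * (1 - h * δ i) + h * (1 - x i) * S := by
    simp only [SIS, hSdef]; ring
  have h1 : h * δ i ≤ 1 := (hA3a i).1
  have h2 : h * ((∑ j, B i j) + ∑ j, ∑ k, H i j k) ≤ 1 := (hA3a i).2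
  have hxi0 := hx0 i
  have hxi1 := hx1 i
  have hδi := hδ i
  refine ⟨?_, ?_, ?_⟩
  · rw [heq]
    have : 0 ≤ x i * (1 - h * δ i) := mul_nonneg hxi0 (by linarith)
    nlinarith [mul_nonneg (mul_nonneg hh.le (by linarith : (0:ℝ) ≤ 1 - x i)) hS0]
  · rw [heq]
    have hST : S ≤ (∑ j, B i j) + ∑ j, ∑ k, H i j k := add_le_add hSB1 hSH1
    have hhS : h * S ≤ 1 := le_trans (mul_le_mul_of_nonneg_left hST hh.le) h2
    nlinarith [mul_nonneg hh.le hS0, mul_nonneg hxi0 (mul_pos hh hδi).le]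
  · rw [heq]
    have e1 : x i * (1 - h * δ i) ≤ m * (1 - h * δ i) :=
      mul_le_mul_of_nonneg_right (hxm i) (by linarith)
    have e2 : h * (1 - x i) * S ≤ h * S := by
      nlinarith [mul_nonneg hh.le hS0, mul_nonneg (mul_nonneg hh.le hxi0) hS0]
    have e3 : h * S ≤ h * ((∑ j, B i j) * m + (∑ j, ∑ k, H i j k) * (m * M)) :=
      mul_le_mul_of_nonneg_left (add_le_add hSB hSH) hh.le
    nlinarith

/-- Geometric decay of the max norm along trajectories, when
`δ_i - Σ_j β_{ij} - M Σ_{jk} β_{ijk} > 0` for all `i` and `‖x 0‖ ≤ M`. -/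
lemma sis_decay {n : ℕ} (hn0 : n ≠ 0) {h : ℝ} (hh : 0 < h) {δ : Fin n → ℝ}
    {B : Matrix (Fin n) (Fin n) ℝ} {H : Fin n → Fin n → Fin n → ℝ}
    (hδ : ∀ i, 0 < δ i) (hB : ∀ i j, 0 ≤ B i j) (hH : ∀ i j k, 0 ≤ H i j k)
    (hA3a : ∀ i, h * δ i ≤ 1 ∧ h * ((∑ j, B i j) + ∑ j, ∑ k, H i j k) ≤ 1)
    {M : ℝ} (hM0 : 0 ≤ M)
    (hc : ∀ i, 0 < δ i - (∑ j, B i j) - M * ∑ j, ∑ k, H i j k)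
    (x : ℕ → Fin n → ℝ) (hx : IsTraj (SIS h δ B H) x) (h0 : InCube (x 0))
    (hM : ‖x 0‖ ≤ M) :
    ∃ c : ℝ, 0 ≤ c ∧ c < 1 ∧ ∀ t, InCube (x t) ∧ ‖x t‖ ≤ c ^ t * ‖x 0‖ := by
  have hne : Nonempty (Fin n) := Fin.pos_iff_nonempty.mp (Nat.pos_of_ne_zero hn0)
  have hune : (Finset.univ : Finset (Fin n)).Nonempty := Finset.univ_nonempty
  set f : Fin n → ℝ := fun i => 1 - h * (δ i - (∑ j, B i j) - M * ∑ j, ∑ k, H i j k)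
    with hfdef
  set c : ℝ := Finset.univ.sup' hune f with hcdef
  have hcle : ∀ i, f i ≤ c := fun i => Finset.le_sup' f (Finset.mem_univ i)
  have hf0 : ∀ i, 0 ≤ f i := by
    intro i
    have h1 : h * δ i ≤ 1 := (hA3a i).1
    have hBs : 0 ≤ ∑ j, B i j := Finset.sum_nonneg fun j _ => hB i j
    have hHs : 0 ≤ ∑ j, ∑ k, H i j k :=
      Finset.sum_nonneg fun j _ => Finset.sum_nonneg fun k _ => hH i j k
    have : 0 ≤ h * ((∑ j, B i j) + M * ∑ j, ∑ k, H i j k) :=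
      mul_nonneg hh.le (add_nonneg hBs (mul_nonneg hM0 hHs))
    simp only [hfdef]; nlinarith
  have hc0 : 0 ≤ c := le_trans (hf0 (Classical.arbitrary _)) (hcle _)
  have hc1 : c < 1 := by
    obtain ⟨j, -, hj⟩ := Finset.exists_mem_eq_sup' hune f
    have hcj : c = f j := hj
    rw [hcj]
    have := hc j
    have := mul_pos hh this
    simp only [hfdef]; linarith
  refine ⟨c, hc0, hc1, ?_⟩
  intro t
  induction t with
  | zero => exact ⟨h0, by simp⟩
  | succ t ih =>
    obtain ⟨hcube, hnorm⟩ := ih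
    set m : ℝ := c ^ t * ‖x 0‖ with hmdef
    have hm0 : 0 ≤ m := mul_nonneg (pow_nonneg hc0 t) (norm_nonneg _)
    have hmM : m ≤ M := by
      have : c ^ t ≤ 1 := pow_le_one₀ hc0 hc1.le
      calc m ≤ 1 * ‖x 0‖ := mul_le_mul_of_nonneg_right this (norm_nonneg _)
        _ = ‖x 0‖ := one_mul _
        _ ≤ M := hM
    have hxm : ∀ i, x t i ≤ m := fun i =>
      le_trans (le_trans (le_abs_self _)
        ((Real.norm_eq_abs _) ▸ norm_le_pi_norm (x t) i)) hnorm
    have hstep := fun i => sis_step hh hδ hB hH hA3a hcube hm0 hmM hxm i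
    have hxt : x (t + 1) = SIS h δ B H (x t) := hx t
    constructor
    · intro i
      rw [hxt]
      exact ⟨(hstep i).1, (hstep i).2.1⟩
    · have hb : ∀ i, ‖x (t + 1) i‖ ≤ c * m := by
        intro i
        rw [hxt, Real.norm_eq_abs, abs_le]
        have hle : SIS h δ B H (x t) i ≤ c * m :=
          le_trans (hstep i).2.2 (mul_le_mul_of_nonneg_right (hcle i) hm0)
        have hge := (hstep i).1
        exact ⟨by nlinarith [mul_nonneg hc0 hm0], hle⟩
      have : ‖x (t + 1)‖ ≤ c * m :=
        (pi_norm_le_iff_of_nonneg (mul_nonneg hc0 hm0)).mpr hb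
      calc ‖x (t + 1)‖ ≤ c * m := this
        _ = c ^ (t + 1) * ‖x 0‖ := by rw [hmdef]; ring

/-- From geometric decay: norm monotone bound and convergence to the origin. -/
lemma sis_conv {n : ℕ} (hn0 : n ≠ 0) {h : ℝ} (hh : 0 < h) {δ : Fin n → ℝ}
    {B : Matrix (Fin n) (Fin n) ℝ} {H : Fin n → Fin n → Fin n → ℝ}
    (hδ : ∀ i, 0 < δ i) (hB : ∀ i j, 0 ≤ B i j) (hH : ∀ i j k, 0 ≤ H i j k)
    (hA3a : ∀ i, h * δ i ≤ 1 ∧ h * ((∑ j, B i j) + ∑ j, ∑ k, H i j k) ≤ 1)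
    {M : ℝ} (hM0 : 0 ≤ M)
    (hc : ∀ i, 0 < δ i - (∑ j, B i j) - M * ∑ j, ∑ k, H i j k)
    (x : ℕ → Fin n → ℝ) (hx : IsTraj (SIS h δ B H) x) (h0 : InCube (x 0))
    (hM : ‖x 0‖ ≤ M) :
    (∀ t, ‖x t‖ ≤ ‖x 0‖) ∧ Tendsto x atTop (nhds 0) := by
  obtain ⟨c, hc0, hc1, hdec⟩ := sis_decay hn0 hh hδ hB hH hA3a hM0 hc x hx h0 hM
  constructor
  · intro t
    have := (hdec t).2
    have hpow : c ^ t ≤ 1 := pow_le_one₀ hc0 hc1.le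
    calc ‖x t‖ ≤ c ^ t * ‖x 0‖ := this
      _ ≤ 1 * ‖x 0‖ := mul_le_mul_of_nonneg_right hpow (norm_nonneg _)
      _ = ‖x 0‖ := one_mul _
  · have hg : Tendsto (fun t : ℕ => c ^ t * ‖x 0‖) atTop (nhds 0) := by
      have := (tendsto_pow_atTop_nhds_zero_of_lt_one hc0 hc1).mul_const ‖x 0‖
      simpa using this
    exact squeeze_zero_norm (fun t => (hdec t).2) hg

/-- with `H` irreducible, (a) if `Σ_j β_{ij} < δ_i < Σ_j β_{ij} + Σ_{j,k} β_{ijk}`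
for all `i`, the healthy state is locally asymptotically stable with domain of attraction
`max_i |x_i(0)| < α₁ = min_i (δ_i − Σ_j β_{ij})/(Σ_{j,k} β_{ijk})`; (b) if
`δ_i > Σ_j β_{ij} + Σ_{j,k} β_{ijk}` for all `i`, the healthy state is globally
asymptotically stable on `[0,1]^n`. -/
theorem stmt4 {n : ℕ} (hn : 2 ≤ n) (h : ℝ) (hh : 0 < h)
    (δ : Fin n → ℝ) (B : Matrix (Fin n) (Fin n) ℝ) (H : Fin n → Fin n → Fin n → ℝ)
    (hδ : ∀ i, 0 < δ i) (hB : ∀ i j, 0 ≤ B i j) (hH : ∀ i j k, 0 ≤ H i j k)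
    (hA2 : MatIrred B)
    (hA3a : ∀ i, h * δ i ≤ 1 ∧ h * ((∑ j, B i j) + ∑ j, ∑ k, H i j k) ≤ 1)
    (hHirr : TensIrred H) :
    ((∀ i, (∑ j, B i j) < δ i ∧ δ i < (∑ j, B i j) + ∑ j, ∑ k, H i j k) →
      LocAsympStable (SIS h δ B H) 0 ∧
      ∀ x : ℕ → Fin n → ℝ, IsTraj (SIS h δ B H) x → InCube (x 0) →
        ‖x 0‖ < (⨅ i, (δ i - ∑ j, B i j) / (∑ j, ∑ k, H i j k)) →
        Tendsto x atTop (nhds 0)) ∧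
    ((∀ i, (∑ j, B i j) + (∑ j, ∑ k, H i j k) < δ i) →
      LocAsympStable (SIS h δ B H) 0 ∧
      ∀ x : ℕ → Fin n → ℝ, IsTraj (SIS h δ B H) x → InCube (x 0) →
        Tendsto x atTop (nhds 0)) := by
  have hn0 : n ≠ 0 := by omega
  have hne : Nonempty (Fin n) := Fin.pos_iff_nonempty.mp (by omega)
  constructor
  · intro ha
    set f : Fin n → ℝ := fun i => (δ i - ∑ j, B i j) / (∑ j, ∑ k, H i j k) with hfdef
    have hHpos : ∀ i, 0 < ∑ j, ∑ k, H i j k := fun i => by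
      have h1 := (ha i).1; have h2 := (ha i).2; linarith
    have hfpos : ∀ i, 0 < f i := fun i => div_pos (by linarith [(ha i).1]) (hHpos i)
    have hbdd : BddBelow (Set.range f) := (Set.finite_range f).bddBelow
    obtain ⟨i₀, -, hi₀⟩ := Finset.exists_min_image Finset.univ f Finset.univ_nonempty
    have hαpos : 0 < ⨅ i, f i :=
      lt_of_lt_of_le (hfpos i₀) (le_ciInf fun i => hi₀ i (Finset.mem_univ i))
    have key : ∀ x : ℕ → Fin n → ℝ, IsTraj (SIS h δ B H) x → InCube (x 0) →
        ‖x 0‖ < ⨅ i, f i → (∀ t, ‖x t‖ ≤ ‖x 0‖) ∧ Tendsto x atTop (nhds 0) := by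
      intro x hx h0 hα
      apply sis_conv hn0 hh hδ hB hH hA3a (norm_nonneg (x 0)) ?_ x hx h0 le_rfl
      intro i
      have h1 : ‖x 0‖ < f i := lt_of_lt_of_le hα (ciInf_le hbdd i)
      have h2 : ‖x 0‖ * (∑ j, ∑ k, H i j k) < δ i - ∑ j, B i j :=
        (lt_div_iff₀ (hHpos i)).mp h1
      linarith
    constructor
    · intro ε hε
      refine ⟨min ε (⨅ i, f i), lt_min hε hαpos, ?_⟩
      intro x hx h0 hxd
      rw [sub_zero] at hxd
      simp only [sub_zero]
      have h1 : ‖x 0‖ < ⨅ i, f i := lt_of_lt_of_le hxd (min_le_right _ _)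
      obtain ⟨hbnd, ht⟩ := key x hx h0 h1
      exact ⟨fun t => lt_of_le_of_lt (hbnd t) (lt_of_lt_of_le hxd (min_le_left _ _)), ht⟩
    · intro x hx h0 hα
      exact (key x hx h0 hα).2
  · intro hb
    have hc : ∀ i, 0 < δ i - (∑ j, B i j) - 1 * ∑ j, ∑ k, H i j k := fun i => by
      have := hb i; linarith
    have hM : ∀ y : Fin n → ℝ, InCube y → ‖y‖ ≤ 1 := fun y hy =>
      (pi_norm_le_iff_of_nonneg zero_le_one).mpr fun i => by
        rw [Real.norm_eq_abs, abs_le]; exact ⟨by linarith [(hy i).1], (hy i).2⟩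
    constructor
    · intro ε hε
      refine ⟨ε, hε, ?_⟩
      intro x hx h0 hxd
      rw [sub_zero] at hxd
      simp only [sub_zero]
      obtain ⟨hbd, ht⟩ :=
        sis_conv hn0 hh hδ hB hH hA3a zero_le_one hc x hx h0 (hM _ h0)
      exact ⟨fun t => lt_of_le_of_lt (hbd t) hxd, ht⟩
    · intro x hx h0
      exact (sis_conv hn0 hh hδ hB hH hA3a zero_le_one hc x hx h0 (hM _ h0)).2
end

section
/- Under Assumptions A5 and A6a, every trajectory of the bi-virus SIS map G starting in S satisfies (x₁(t), x₂(t)) ∈ S for all t ≥ 0; that is, x_{ℓi}(t) ∈ [0,1] and 1 − x_{1i}(t) − x_{2i}(t) ∈ [0,1] for all i ∈ {1,…,n}, ℓ ∈ {1,2} and all t ≥ 0, so that S is positively invariant under G. -/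
open Finset Filter

/-- The bi-virus discrete-time higher-order SIS map `G`: virus `ℓ ∈ {0,1}` evolves by
`y_{ℓi} = x_{ℓi} + h(−δ_{ℓi} x_{ℓi} + (1 − x_{0i} − x_{1i})(Σ_j β_{ℓ,ij} x_{ℓj}
+ Σ_{j,k} β_{ℓ,ijk} x_{ℓj} x_{ℓk}))`. -/
noncomputable def biSIS {n : ℕ} (h : ℝ) (δ : Fin 2 → Fin n → ℝ)
    (B : Fin 2 → Matrix (Fin n) (Fin n) ℝ) (H : Fin 2 → Fin n → Fin n → Fin n → ℝ)
    (x : Fin 2 → Fin n → ℝ) : Fin 2 → Fin n → ℝ := fun ℓ i =>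
  x ℓ i + h * (-(δ ℓ i * x ℓ i) + (1 - x 0 i - x 1 i) *
    ((∑ j, B ℓ i j * x ℓ j) + ∑ j, ∑ k, H ℓ i j k * x ℓ j * x ℓ k))

/-- `x` is a trajectory of the discrete-time system `x(t+1) = G(x(t))`. -/
def IsTraj2 {n : ℕ} (G : (Fin 2 → Fin n → ℝ) → Fin 2 → Fin n → ℝ)
    (x : ℕ → Fin 2 → Fin n → ℝ) : Prop := ∀ t, x (t + 1) = G (x t)

/-- The simplex-like invariant set
`S = {(x₁,x₂) : x_{ℓi} ≥ 0, x_{1i} + x_{2i} ≤ 1}`. -/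
def InS {n : ℕ} (x : Fin 2 → Fin n → ℝ) : Prop :=
  (∀ ℓ i, 0 ≤ x ℓ i) ∧ ∀ i, x 0 i + x 1 i ≤ 1

/-- Local asymptotic stability (max-norm) of an equilibrium `p` of the bi-virus map,
for trajectories starting in `S`. -/
def LocAsympStable2 {n : ℕ} (G : (Fin 2 → Fin n → ℝ) → Fin 2 → Fin n → ℝ)
    (p : Fin 2 → Fin n → ℝ) : Prop :=
  ∀ ε > 0, ∃ d > 0, ∀ x : ℕ → Fin 2 → Fin n → ℝ, IsTraj2 G x → InS (x 0) →
    ‖x 0 - p‖ < d → (∀ t, ‖x t - p‖ < ε) ∧ Tendsto x atTop (nhds p)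

/-- Instability (max-norm) of an equilibrium `p` of the bi-virus map, for trajectories
starting in `S`. -/
def Unstable2 {n : ℕ} (G : (Fin 2 → Fin n → ℝ) → Fin 2 → Fin n → ℝ)
    (p : Fin 2 → Fin n → ℝ) : Prop :=
  ∃ ε > 0, ∀ d > 0, ∃ x : ℕ → Fin 2 → Fin n → ℝ, IsTraj2 G x ∧ InS (x 0) ∧
    ‖x 0 - p‖ < d ∧ ∃ t, ε ≤ ‖x t - p‖

/-- under Assumptions A5 and A6a, the set `S` is positively invariant
under the bi-virus SIS map `G`: along any trajectory starting in `S`, `x_{ℓi}(t) ∈ [0,1]`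
and `1 − x_{1i}(t) − x_{2i}(t) ∈ [0,1]` for all `ℓ, i, t`. -/
theorem stmt8 {n : ℕ} (hn : 2 ≤ n) (h : ℝ) (hh : 0 < h)
    (δ : Fin 2 → Fin n → ℝ) (B : Fin 2 → Matrix (Fin n) (Fin n) ℝ)
    (H : Fin 2 → Fin n → Fin n → Fin n → ℝ)
    (hδ : ∀ ℓ i, 0 < δ ℓ i) (hB : ∀ ℓ i j, 0 ≤ B ℓ i j) (hH : ∀ ℓ i j k, 0 ≤ H ℓ i j k)
    (hA5 : ∀ ℓ, MatIrred (B ℓ))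
    (hA6a : ∀ ℓ i, h * δ ℓ i ≤ 1 ∧
      h * (∑ l, ((∑ j, B l i j) + ∑ j, ∑ k, H l i j k)) ≤ 1)
    (x : ℕ → Fin 2 → Fin n → ℝ) (hx : IsTraj2 (biSIS h δ B H) x) (h0 : InS (x 0)) :
    ∀ t, InS (x t) ∧ (∀ ℓ i, x t ℓ i ∈ Set.Icc (0 : ℝ) 1) ∧
      ∀ i, 1 - x t 0 i - x t 1 i ∈ Set.Icc (0 : ℝ) 1 := by

  have step : ∀ y : Fin 2 → Fin n → ℝ, InS y → InS (biSIS h δ B H y) := by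
    intro y hy
    obtain ⟨hy0, hy1⟩ := hy
    have hxle1 : ∀ ℓ i, y ℓ i ≤ 1 := by
      intro ℓ i
      fin_cases ℓ
      · show y 0 i ≤ 1; linarith [hy0 1 i, hy1 i]
      · show y 1 i ≤ 1; linarith [hy0 0 i, hy1 i]
    have hr : ∀ i, 0 ≤ 1 - y 0 i - y 1 i := fun i => by linarith [hy1 i]
    have hF : ∀ ℓ i, 0 ≤ (∑ j, B ℓ i j * y ℓ j) + ∑ j, ∑ k, H ℓ i j k * y ℓ j * y ℓ k := by
      intro ℓ i
      have h1 : 0 ≤ ∑ j, B ℓ i j * y ℓ j :=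
        Finset.sum_nonneg fun j _ => mul_nonneg (hB ℓ i j) (hy0 ℓ j)
      have h2 : 0 ≤ ∑ j, ∑ k, H ℓ i j k * y ℓ j * y ℓ k :=
        Finset.sum_nonneg fun j _ => Finset.sum_nonneg fun k _ =>
          mul_nonneg (mul_nonneg (hH ℓ i j k) (hy0 ℓ j)) (hy0 ℓ k)
      linarith
    have hFle : ∀ ℓ i, (∑ j, B ℓ i j * y ℓ j) + (∑ j, ∑ k, H ℓ i j k * y ℓ j * y ℓ k)
        ≤ (∑ j, B ℓ i j) + ∑ j, ∑ k, H ℓ i j k := by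
      intro ℓ i
      have h1 : ∑ j, B ℓ i j * y ℓ j ≤ ∑ j, B ℓ i j :=
        Finset.sum_le_sum fun j _ => by nlinarith [hB ℓ i j, hy0 ℓ j, hxle1 ℓ j]
      have h2 : ∑ j, ∑ k, H ℓ i j k * y ℓ j * y ℓ k ≤ ∑ j, ∑ k, H ℓ i j k :=
        Finset.sum_le_sum fun j _ => Finset.sum_le_sum fun k _ => by
          have hyy : y ℓ j * y ℓ k ≤ 1 := mul_le_one₀ (hxle1 ℓ j) (hy0 ℓ k) (hxle1 ℓ k)
          calc H ℓ i j k * y ℓ j * y ℓ k = H ℓ i j k * (y ℓ j * y ℓ k) := by ring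
            _ ≤ H ℓ i j k * 1 := mul_le_mul_of_nonneg_left hyy (hH ℓ i j k)
            _ = H ℓ i j k := mul_one _
      linarith
    constructor
    · intro ℓ i
      simp only [biSIS]
      have h1 := (hA6a ℓ i).1
      nlinarith [hy0 ℓ i, mul_nonneg hh.le (mul_nonneg (hr i) (hF ℓ i)),
        mul_nonneg (hy0 ℓ i) (sub_nonneg.mpr h1)]
    · intro i
      simp only [biSIS]
      have hsum := (hA6a 0 i).2
      rw [Fin.sum_univ_two] at hsum
      have hF0 := hF 0 i
      have hF1 := hF 1 i
      have hFle0 := hFle 0 i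
      have hFle1 := hFle 1 i
      have hhF : h * (((∑ j, B 0 i j * y 0 j) + ∑ j, ∑ k, H 0 i j k * y 0 j * y 0 k)
          + ((∑ j, B 1 i j * y 1 j) + ∑ j, ∑ k, H 1 i j k * y 1 j * y 1 k)) ≤ 1 := by
        nlinarith
      nlinarith [hr i, mul_nonneg (hr i) (sub_nonneg.mpr hhF),
        mul_nonneg (mul_nonneg hh.le (hδ 0 i).le) (hy0 0 i),
        mul_nonneg (mul_nonneg hh.le (hδ 1 i).le) (hy0 1 i)]
  have hInS : ∀ t, InS (x t) := by
    intro t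
    induction t with
    | zero => exact h0
    | succ t ih => rw [hx t]; exact step (x t) ih
  intro t
  obtain ⟨hp, hs⟩ := hInS t
  have hle1 : ∀ ℓ i, x t ℓ i ≤ 1 := by
    intro ℓ i
    fin_cases ℓ
    · show x t 0 i ≤ 1; linarith [hp 1 i, hs i]
    · show x t 1 i ≤ 1; linarith [hp 0 i, hs i]
  exact ⟨⟨hp, hs⟩, fun ℓ i => ⟨hp ℓ i, hle1 ℓ i⟩,
    fun i => ⟨by linarith [hs i], by linarith [hp 0 i, hp 1 i]⟩⟩
end
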